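/- arXiv:2510.27290 — 2 statements merged into one kernel-verified Lean document; each statement's English description precedes it below -/
import Mathlib

section
/- Let 𝔟 ≥ 1 and let Y ⊆ 𝔟^ℤ be the subshift of finite type described by forbidden patterns p_1,…,p_k. Then there exists a Borel equivariant map from F(2^ℤ) to Y if and only if there exists a continuous equivariant map from F(2^ℤ) to Y. -/
/-- The shift action of `ℤ` on `α^ℤ`: `(s · x)(n) = x(n + s)`. -/
def shift {α : Type*} (s : ℤ) (x : ℤ → α) : ℤ → α := fun n => x (n + s)

/-- The free part `F(2^ℤ)` of the shift action on `2^ℤ = (ℤ → Bool)`. -/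
def FreePart : Set (ℤ → Bool) := {x | ∀ s : ℤ, s ≠ 0 → shift s x ≠ x}

/-- The pattern `p` (of length `L`) occurs in `y ∈ b^ℤ`. -/
def Occurs {b L : ℕ} (p : Fin L → Fin b) (y : ℤ → Fin b) : Prop :=
  ∃ m : ℤ, ∀ i : Fin L, y (m + (i : ℤ)) = p i

/-- The subshift of finite type described by `(b; P 0, …, P (k-1))`:
the set of points of `b^ℤ` in which none of the forbidden patterns occurs. -/
def SFT {b L k : ℕ} (P : Fin k → Fin L → Fin b) : Set (ℤ → Fin b) :=
  {y | ∀ j : Fin k, ¬ Occurs (P j) y}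

/-- `f : F(2^ℤ) → Y` is equivariant: `f(s · x) = s · f(x)`. -/
def EquivariantOn {b : ℕ} (Y : Set (ℤ → Fin b))
    (f : {x : ℤ → Bool // x ∈ FreePart} → {y : ℤ → Fin b // y ∈ Y}) : Prop :=
  ∀ (x : {x : ℤ → Bool // x ∈ FreePart}) (s : ℤ) (h : shift s x.1 ∈ FreePart),
    (f ⟨shift s x.1, h⟩ : ℤ → Fin b) = shift s (f x : ℤ → Fin b)


namespace BCEM

open Topology Filter Set

attribute [local instance] Classical.propDecidable

lemma shift_shift {α : Type*} (a b : ℤ) (x : ℤ → α) :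
    shift a (shift b x) = shift (b + a) x := by
  funext n; simp [shift, add_assoc, add_comm a b]

lemma shift_zero {α : Type*} (x : ℤ → α) : shift 0 x = x := by funext n; simp [shift]

lemma shift_mem_freePart {x : ℤ → Bool} (hx : x ∈ FreePart) (s : ℤ) :
    shift s x ∈ FreePart := by
  intro t ht h
  have h2 : shift (s + t) x = shift s x := by rw [← shift_shift]; exact h
  have h3 : shift (-s) (shift (s+t) x) = shift (-s) (shift s x) := by rw [h2]
  rw [shift_shift, shift_shift] at h3
  rw [show s + t + -s = t by ring, show s + -s = 0 by ring, shift_zero] at h3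
  exact hx t ht h3

/-- Representation lemma: if `q₁, q₂` are coprime positive integers, every
`G ≥ q₁ * q₂` is a nonnegative combination. -/
lemma rep_lemma {q₁ q₂ : ℕ} (h1 : 0 < q₁) (h2 : 0 < q₂) (hco : Nat.Coprime q₁ q₂)
    {G : ℕ} (hG : q₁ * q₂ ≤ G) : ∃ a c : ℕ, G = a * q₁ + c * q₂ := by
  -- work in ℤ
  have hinv : ∃ u : ℤ, (u * q₁) % q₂ = 1 % q₂ := by
    have := Nat.gcd_eq_gcd_ab q₁ q₂
    refine ⟨Nat.gcdA q₁ q₂, ?_⟩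
    have h1' : (1 : ℤ) = q₁ * Nat.gcdA q₁ q₂ + q₂ * Nat.gcdB q₁ q₂ := by
      rw [← this]; exact_mod_cast congrArg (fun n : ℕ => (n : ℤ)) hco.gcd_eq_one |>.symm
    rw [show (Nat.gcdA q₁ q₂) * q₁ = 1 - q₂ * Nat.gcdB q₁ q₂ by linarith]
    simp [Int.sub_emod, Int.mul_emod_right]
  obtain ⟨u, hu⟩ := hinv
  set a : ℤ := (G * u) % q₂ with ha
  have hq2 : (0:ℤ) < q₂ := by exact_mod_cast h2
  have ha0 : 0 ≤ a := Int.emod_nonneg _ (by positivity)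
  have haq : a < q₂ := by
    have := Int.emod_lt_of_pos (G * u) hq2; omega
  have hdvd : (q₂:ℤ) ∣ (G - a * q₁) := by
    have : (G - a * q₁) % q₂ = 0 := by
      have h3 : a % q₂ = (G * u) % q₂ := by simp [ha, Int.emod_emod_of_dvd]
      have : (a * q₁) % q₂ = (G * (u * q₁)) % q₂ := by
        conv_lhs => rw [Int.mul_emod, h3, ← Int.mul_emod]
        rw [mul_assoc]
      rw [Int.sub_emod, this, Int.mul_emod, hu, ← Int.mul_emod]
      simp
    exact Int.dvd_of_emod_eq_zero this
  have hpos : 0 ≤ (G:ℤ) - a * q₁ := by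
    have : a * q₁ ≤ (q₂ - 1) * q₁ := by
      apply mul_le_mul_of_nonneg_right _ (by positivity)
      omega
    have hq1 : (q₁:ℤ) * q₂ ≤ G := by exact_mod_cast hG
    nlinarith
  obtain ⟨c, hc⟩ := hdvd
  have hc0 : 0 ≤ c := by nlinarith
  refine ⟨a.toNat, c.toNat, ?_⟩
  have : (G:ℤ) = a * q₁ + c * q₂ := by linarith
  have h4 : (G:ℤ) = (a.toNat : ℤ) * q₁ + (c.toNat : ℤ) * q₂ := by
    rwa [Int.toNat_of_nonneg ha0, Int.toNat_of_nonneg hc0]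
  exact_mod_cast h4


/-! ### Stages -/

def Pat (t : ℕ) := Fin (2*t+1) → Bool

instance : Countable (Σ t : ℕ, Pat t) := by unfold Pat; infer_instance
instance : Nonempty (Σ t : ℕ, Pat t) := ⟨⟨0, fun _ => false⟩⟩

noncomputable def σf : ℕ → Σ t : ℕ, Pat t := (exists_surjective_nat _).choose

lemma σf_surj : Function.Surjective σf := (exists_surjective_nat _).choose_spec

def matchesP (x : ℤ → Bool) (s : Σ t : ℕ, Pat t) : Prop :=
  ∀ j : Fin (2*s.1+1), x ((j:ℤ) - s.1) = s.2 j

/-! ### Markers -/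

def Mk (K : ℕ) : ℕ → (ℤ → Bool) → Prop
  | n, x => (matchesP x (σf n) ∧
      ∀ i : ℤ, i ≠ 0 → |i| ≤ K → ¬ matchesP (shift i x) (σf n))
      ∧ ∀ m, m < n → ∀ i : ℤ, |i| ≤ (K:ℤ) → ¬ Mk K m (shift i x)
  termination_by n _ => n

lemma Mk_def (K : ℕ) (n : ℕ) (x : ℤ → Bool) :
    Mk K n x ↔ ((matchesP x (σf n) ∧
      ∀ i : ℤ, i ≠ 0 → |i| ≤ K → ¬ matchesP (shift i x) (σf n))
      ∧ ∀ m, m < n → ∀ i : ℤ, |i| ≤ (K:ℤ) → ¬ Mk K m (shift i x)) := by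
  rw [Mk]

def IsMk (K : ℕ) (x : ℤ → Bool) : Prop := ∃ n, Mk K n x

lemma mk_min_gap {K : ℕ} {n m : ℕ} {x : ℤ → Bool} {i : ℤ}
    (h1 : Mk K n x) (h2 : Mk K m (shift i x)) (hne : i ≠ 0) (hi : |i| ≤ K) : False := by
  rcases lt_trichotomy m n with h | h | h
  · exact (Mk_def K n x).1 h1 |>.2 m h i hi h2
  · subst h
    exact ((Mk_def K m x).1 h1).1.2 i hne hi ((Mk_def K m _).1 h2).1.1
  · have hx : Mk K n (shift (-i) (shift i x)) := by
      rw [shift_shift, show i + -i = 0 by ring, shift_zero]; exact h1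
    exact ((Mk_def K m _).1 h2).2 n h (-i) (by rwa [abs_neg]) hx

lemma isMk_min_gap {K : ℕ} {x : ℤ → Bool} {i : ℤ}
    (h1 : IsMk K x) (h2 : IsMk K (shift i x)) (hne : i ≠ 0) (hi : |i| ≤ K) : False := by
  obtain ⟨n, h1⟩ := h1; obtain ⟨m, h2⟩ := h2; exact mk_min_gap h1 h2 hne hi

lemma exists_mk_near {K : ℕ} {x : ℤ → Bool} (hx : x ∈ FreePart) :
    ∃ i : ℤ, |i| ≤ K ∧ IsMk K (shift i x) := by
  classical
  have H : ∀ i : ℤ, i ≠ 0 → ∃ w : ℤ, x (w + i) ≠ x w := by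
    intro i hi
    have := hx i hi
    rw [Function.ne_iff] at this
    obtain ⟨w, hw⟩ := this
    exact ⟨w, hw⟩
  set W : ℤ → ℤ := fun i => if h : ∃ w : ℤ, x (w + i) ≠ x w then h.choose else 0 with hW
  have hWspec : ∀ i : ℤ, i ≠ 0 → x (W i + i) ≠ x (W i) := by
    intro i hi
    have h := H i hi
    simp only [hW, dif_pos h]
    exact h.choose_spec
  set S : Finset ℤ := (Finset.Icc (-(K:ℤ)) K).erase 0 with hS
  set t₀ : ℕ := S.sup (fun i => (W i).natAbs) with ht₀
  have hWt : ∀ i : ℤ, i ≠ 0 → |i| ≤ K → (W i).natAbs ≤ t₀ := by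
    intro i h1 h2
    rw [ht₀]
    exact Finset.le_sup (f := fun i : ℤ => (W i).natAbs) (Finset.mem_erase.mpr
      ⟨h1, Finset.mem_Icc.mpr ⟨(abs_le.mp h2).1, (abs_le.mp h2).2⟩⟩)
  set p : Pat t₀ := fun j => x ((j:ℤ) - t₀) with hp
  obtain ⟨n₀, hn₀⟩ := σf_surj ⟨t₀, p⟩
  have hmat : matchesP x (σf n₀) := by
    rw [hn₀]; intro j; rfl
  have hiso : ∀ i : ℤ, i ≠ 0 → |i| ≤ K → ¬ matchesP (shift i x) (σf n₀) := by
    intro i h1 h2 hm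
    rw [hn₀] at hm
    have hw := hWspec i h1
    have hwt := hWt i h1 h2
    have hb : (W i + t₀).toNat < 2*t₀+1 := by omega
    have := hm ⟨(W i + t₀).toNat, hb⟩
    simp only [shift, hp] at this
    have hcast : ((⟨(W i + t₀).toNat, hb⟩ : Fin (2*t₀+1)) : ℤ) = W i + t₀ := by
      simp; omega
    rw [hcast] at this
    have : x (W i + t₀ - t₀ + i) = x (W i + t₀ - t₀) := this
    rw [show W i + t₀ - t₀ + i = W i + i by ring, show W i + (t₀:ℤ) - t₀ = W i by ring] at this
    exact hw this
  by_cases hc : ∀ m, m < n₀ → ∀ i : ℤ, |i| ≤ (K:ℤ) → ¬ Mk K m (shift i x)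
  · refine ⟨0, by simp, n₀, ?_⟩
    rw [shift_zero, Mk_def]
    exact ⟨⟨hmat, hiso⟩, hc⟩
  · push_neg at hc
    obtain ⟨m, _, i, hi, hmk⟩ := hc
    exact ⟨i, hi, m, hmk⟩

/-! ### Local determination -/

noncomputable def Rad (K : ℕ) : ℕ → ℕ
  | 0 => (σf 0).1 + 2*K + 1
  | n+1 => Rad K n + (σf (n+1)).1 + 2*K + 1

lemma Rad_ge_t (K n : ℕ) : (σf n).1 + 2*K ≤ Rad K n := by
  cases n with
  | zero => rw [Rad]; omega
  | succ n => rw [Rad]; omega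

lemma Rad_succ (K n : ℕ) : Rad K (n+1) = Rad K n + (σf (n+1)).1 + 2*K + 1 := by
  rw [Rad]

lemma Rad_le_succ (K n : ℕ) : Rad K n ≤ Rad K (n+1) := by
  rw [Rad_succ]; omega

lemma Rad_mono {K m n : ℕ} (h : m < n) : Rad K m + 2*K ≤ Rad K n := by
  induction n with
  | zero => omega
  | succ n IH =>
    rcases Nat.lt_succ_iff_lt_or_eq.mp h with h' | h'
    · exact le_trans (IH h') (Rad_le_succ K n)
    · subst h'; rw [Rad_succ]; omega

lemma mk_local {K : ℕ} (n : ℕ) {x x' : ℤ → Bool}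
    (hagree : ∀ j : ℤ, |j| ≤ (Rad K n : ℤ) → x j = x' j) (h : Mk K n x) : Mk K n x' := by
  induction n using Nat.strong_induction_on generalizing x x' with
  | _ n IH =>
  rw [Mk_def] at h ⊢
  obtain ⟨⟨hm, hiso⟩, hexc⟩ := h
  have ht : ((σf n).1 : ℤ) + 2*K ≤ (Rad K n : ℤ) := by exact_mod_cast Rad_ge_t K n
  refine ⟨⟨?_, ?_⟩, ?_⟩
  · intro j
    have hj : (j:ℤ) < 2*(σf n).1+1 := by exact_mod_cast j.2
    have hle : (0:ℤ) ≤ (j:ℤ) := by positivity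
    rw [← hagree ((j:ℤ) - (σf n).1) (by rw [abs_le]; omega)]
    exact hm j
  · intro i h1 h2 hm'
    apply hiso i h1 h2
    intro j
    have hj : (j:ℤ) < 2*(σf n).1+1 := by exact_mod_cast j.2
    have hle : (0:ℤ) ≤ (j:ℤ) := by positivity
    have h3 := hm' j
    simp only [shift] at h3 ⊢
    rw [hagree ((j:ℤ) - (σf n).1 + i) (by rw [abs_le] at h2 ⊢; omega)]
    exact h3
  · intro m hmn i hi hmk'
    apply hexc m hmn i hi
    have hR : (Rad K m : ℤ) + 2*K ≤ Rad K n := by exact_mod_cast Rad_mono hmn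
    apply IH m hmn (x := shift i x') (x' := shift i x) _ hmk'
    intro j hj
    simp only [shift]
    rw [hagree (j + i) (by rw [abs_le] at hi hj ⊢; omega)]

lemma mk_local_iff {K : ℕ} (n : ℕ) {x x' : ℤ → Bool}
    (hagree : ∀ j : ℤ, |j| ≤ (Rad K n : ℤ) → x j = x' j) : Mk K n x ↔ Mk K n x' :=
  ⟨mk_local n hagree, mk_local n (fun j hj => (hagree j hj).symm)⟩


/-! ### Gap structure -/

section Gap

variable {K : ℕ} {x : ℤ → Bool}

lemma marker_near (hx : x ∈ FreePart) (a : ℤ) :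
    ∃ p : ℤ, a - K ≤ p ∧ p ≤ a + K ∧ IsMk K (shift p x) := by
  obtain ⟨i, hi, hmk⟩ := exists_mk_near (K := K) (shift_mem_freePart hx a)
  rw [shift_shift] at hmk
  rw [abs_le] at hi
  exact ⟨a + i, by omega, by omega, hmk⟩

noncomputable def Sset (K : ℕ) (x : ℤ → Bool) (n : ℤ) : Finset ℤ :=
  (Finset.Icc (n - 2*K) n).filter (fun i => IsMk K (shift i x))

noncomputable def Tset (K : ℕ) (x : ℤ → Bool) (n : ℤ) : Finset ℤ :=
  (Finset.Icc (n + 1) (n + 2*K + 1)).filter (fun i => IsMk K (shift i x))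

lemma Sset_nonempty (hx : x ∈ FreePart) (n : ℤ) : (Sset K x n).Nonempty := by
  obtain ⟨p, h1, h2, h3⟩ := marker_near (K := K) hx (n - K)
  exact ⟨p, Finset.mem_filter.mpr ⟨Finset.mem_Icc.mpr ⟨by omega, by omega⟩, h3⟩⟩

lemma Tset_nonempty (hx : x ∈ FreePart) (n : ℤ) : (Tset K x n).Nonempty := by
  obtain ⟨p, h1, h2, h3⟩ := marker_near (K := K) hx (n + K + 1)
  exact ⟨p, Finset.mem_filter.mpr ⟨Finset.mem_Icc.mpr ⟨by omega, by omega⟩, h3⟩⟩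

noncomputable def prevM (K : ℕ) (x : ℤ → Bool) (n : ℤ) : ℤ :=
  if h : (Sset K x n).Nonempty then (Sset K x n).max' h else 0

noncomputable def nextM (K : ℕ) (x : ℤ → Bool) (n : ℤ) : ℤ :=
  if h : (Tset K x n).Nonempty then (Tset K x n).min' h else 0

variable (hx : x ∈ FreePart)
include hx

lemma prevM_mem (n : ℤ) : prevM K x n ∈ Sset K x n := by
  rw [prevM, dif_pos (Sset_nonempty hx n)]
  exact (Sset K x n).max'_mem _

lemma prevM_le (n : ℤ) : prevM K x n ≤ n :=
  (Finset.mem_Icc.mp (Finset.mem_filter.mp (prevM_mem hx n)).1).2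

lemma prevM_lb (n : ℤ) : n - 2*K ≤ prevM K x n :=
  (Finset.mem_Icc.mp (Finset.mem_filter.mp (prevM_mem hx n)).1).1

lemma prevM_isMk (n : ℤ) : IsMk K (shift (prevM K x n) x) :=
  (Finset.mem_filter.mp (prevM_mem hx n)).2

lemma prevM_max {n i : ℤ} (h1 : prevM K x n < i) (h2 : i ≤ n) : ¬ IsMk K (shift i x) := by
  intro hmk
  have hlb := prevM_lb (K := K) hx n
  have : i ∈ Sset K x n :=
    Finset.mem_filter.mpr ⟨Finset.mem_Icc.mpr ⟨by omega, h2⟩, hmk⟩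
  have : i ≤ prevM K x n := by
    rw [prevM, dif_pos (Sset_nonempty hx n)]
    exact Finset.le_max' _ _ this
  omega

lemma prevM_char {n i : ℤ} (hmk : IsMk K (shift i x)) (hle : i ≤ n)
    (hno : ∀ p, i < p → p ≤ n → ¬ IsMk K (shift p x)) : prevM K x n = i := by
  rcases lt_trichotomy (prevM K x n) i with h | h | h
  · exact absurd hmk (prevM_max hx h hle)
  · exact h
  · exact absurd (prevM_isMk hx n) (hno _ h (prevM_le hx n))

lemma nextM_mem (n : ℤ) : nextM K x n ∈ Tset K x n := by
  rw [nextM, dif_pos (Tset_nonempty hx n)]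
  exact (Tset K x n).min'_mem _

lemma nextM_gt (n : ℤ) : n < nextM K x n := by
  have h := (Finset.mem_Icc.mp (Finset.mem_filter.mp (nextM_mem (K := K) hx n)).1).1
  omega

lemma nextM_ub (n : ℤ) : nextM K x n ≤ n + 2*K + 1 :=
  (Finset.mem_Icc.mp (Finset.mem_filter.mp (nextM_mem hx n)).1).2

lemma nextM_isMk (n : ℤ) : IsMk K (shift (nextM K x n) x) :=
  (Finset.mem_filter.mp (nextM_mem hx n)).2

lemma nextM_min {n i : ℤ} (h1 : n < i) (h2 : i < nextM K x n) : ¬ IsMk K (shift i x) := by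
  intro hmk
  have hub := nextM_ub (K := K) hx n
  have : i ∈ Tset K x n :=
    Finset.mem_filter.mpr ⟨Finset.mem_Icc.mpr ⟨by omega, by omega⟩, hmk⟩
  have : nextM K x n ≤ i := by
    rw [nextM, dif_pos (Tset_nonempty hx n)]
    exact Finset.min'_le _ _ this
  omega

lemma nextM_char {n i : ℤ} (hmk : IsMk K (shift i x)) (hgt : n < i)
    (hno : ∀ p, n < p → p < i → ¬ IsMk K (shift p x)) : nextM K x n = i := by
  rcases lt_trichotomy (nextM K x n) i with h | h | h
  · exact absurd (nextM_isMk hx n) (hno _ (nextM_gt hx n) h)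
  · exact h
  · exact absurd hmk (nextM_min hx hgt h)

omit hx in
lemma isMk_apart {i j : ℤ} (h1 : IsMk K (shift i x)) (h2 : IsMk K (shift j x))
    (hne : i ≠ j) (hd : |i - j| ≤ K) : False := by
  have h3 : IsMk K (shift (i - j) (shift j x)) := by
    rw [shift_shift, show j + (i - j) = i by ring]; exact h1
  exact isMk_min_gap h2 h3 (by omega) hd

lemma gap_min (n : ℤ) : (K:ℤ) < nextM K x n - prevM K x n := by
  by_contra h
  push_neg at h
  have h1 := prevM_le (K := K) hx n
  have h2 := nextM_gt (K := K) hx n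
  exact isMk_apart (K := K) (nextM_isMk hx n) (prevM_isMk hx n) (by omega) (by rw [abs_le]; omega)

lemma prevM_between {m n : ℤ} (h1 : prevM K x n ≤ m) (h2 : m ≤ n) :
    prevM K x m = prevM K x n :=
  prevM_char hx (prevM_isMk hx n) h1
    (fun p hp1 hp2 => prevM_max hx hp1 (by omega))

lemma nextM_between {m n : ℤ} (h1 : n ≤ m) (h2 : m < nextM K x n) :
    nextM K x m = nextM K x n :=
  nextM_char hx (nextM_isMk hx n) (by omega)
    (fun p hp1 hp2 => nextM_min hx (by omega) hp2)

lemma nextM_prevM (n : ℤ) : nextM K x (prevM K x n) = nextM K x n := by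
  apply nextM_char hx (nextM_isMk hx n)
    (lt_of_le_of_lt (prevM_le hx n) (nextM_gt hx n))
  intro p hp1 hp2
  rcases le_or_gt p n with h | h
  · exact prevM_max hx hp1 h
  · exact nextM_min hx h hp2

lemma prevM_self {i : ℤ} (hmk : IsMk K (shift i x)) : prevM K x i = i :=
  prevM_char hx hmk le_rfl (fun p hp1 hp2 => by omega)

omit hx in
lemma isMk_shift_equiv (s i : ℤ) : IsMk K (shift i (shift s x)) ↔ IsMk K (shift (s + i) x) := by
  rw [shift_shift]

lemma prevM_shift (s n : ℤ) : prevM K x (n + s) = prevM K (shift s x) n + s := by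
  have hx' : shift s x ∈ FreePart := shift_mem_freePart hx s
  have h1 : IsMk K (shift (prevM K (shift s x) n + s) x) := by
    have h2 := prevM_isMk (K := K) hx' n
    rw [shift_shift] at h2
    rwa [add_comm s _] at h2
  apply prevM_char hx h1 (by have := prevM_le (K := K) hx' n; omega)
  intro p hp1 hp2 hmk
  have : IsMk K (shift (p - s) (shift s x)) := by
    rw [shift_shift, show s + (p - s) = p by ring]; exact hmk
  exact prevM_max (K := K) hx' (n := n) (by omega) (by omega) this

lemma nextM_shift (s n : ℤ) : nextM K x (n + s) = nextM K (shift s x) n + s := by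
  have hx' : shift s x ∈ FreePart := shift_mem_freePart hx s
  have h1 : IsMk K (shift (nextM K (shift s x) n + s) x) := by
    have h2 := nextM_isMk (K := K) hx' n
    rw [shift_shift] at h2
    rwa [add_comm s _] at h2
  apply nextM_char hx h1 (by have := nextM_gt (K := K) hx' n; omega)
  intro p hp1 hp2 hmk
  have : IsMk K (shift (p - s) (shift s x)) := by
    rw [shift_shift, show s + (p - s) = p by ring]; exact hmk
  exact nextM_min (K := K) hx' (n := n) (by omega) (by omega) this


lemma prevM_gap_const {n p : ℤ} (h1 : prevM K x n ≤ p) (h2 : p < nextM K x n) :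
    prevM K x p = prevM K x n := by
  apply prevM_char hx (prevM_isMk hx n) h1
  intro q hq1 hq2
  rcases le_or_gt q n with h | h
  · exact prevM_max hx hq1 h
  · exact nextM_min hx h (by omega)

lemma nextM_gap_const {n p : ℤ} (h1 : prevM K x n ≤ p) (h2 : p < nextM K x n) :
    nextM K x p = nextM K x n := by
  apply nextM_char hx (nextM_isMk hx n) h2
  intro q hq1 hq2
  rcases le_or_gt q n with h | h
  · exact prevM_max hx (by omega) h
  · exact nextM_min hx h hq2

end Gap

/-! ### Block arithmetic: a gap of length `G = a*q₁ + c*q₂` is tiled by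
`a` blocks of length `q₁` followed by `c` blocks of length `q₂`. -/

def bsv (q₁ q₂ a d : ℕ) : ℕ :=
  if d < a*q₁ then q₁*(d/q₁) else a*q₁ + q₂*((d - a*q₁)/q₂)

def blv (q₁ q₂ a d : ℕ) : ℕ := if d < a*q₁ then q₁ else q₂

def mbv (q₁ q₂ a d : ℕ) : ℕ := if d < a*q₁ then 0 else q₁

section BlockArith

variable {q₁ q₂ a c G : ℕ} (hq₁ : 0 < q₁) (hq₂ : 0 < q₂) (hrep : G = a*q₁ + c*q₂)

lemma bsv_le (d : ℕ) : bsv q₁ q₂ a d ≤ d := by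
  unfold bsv
  split
  · calc q₁*(d/q₁) = d/q₁*q₁ := by ring
    _ ≤ d := Nat.div_mul_le_self d q₁
  · have h2 : q₂*((d - a*q₁)/q₂) ≤ d - a*q₁ := by
      calc q₂*((d - a*q₁)/q₂) = (d - a*q₁)/q₂*q₂ := by ring
      _ ≤ d - a*q₁ := Nat.div_mul_le_self _ q₂
    omega

include hq₁ hq₂ in
lemma bsv_lt (d : ℕ) : d < bsv q₁ q₂ a d + blv q₁ q₂ a d := by
  unfold bsv blv
  split
  · have := Nat.div_add_mod d q₁
    have := Nat.mod_lt d hq₁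
    omega
  · have := Nat.div_add_mod (d - a*q₁) q₂
    have := Nat.mod_lt (d - a*q₁) hq₂
    omega

include hq₁ hq₂ hrep in
lemma bsv_end_le (d : ℕ) (hd : d < G) : bsv q₁ q₂ a d + blv q₁ q₂ a d ≤ G := by
  unfold bsv blv
  split
  · rename_i h
    have hk : d/q₁ < a := Nat.div_lt_of_lt_mul (by rwa [mul_comm])
    have : q₁*(d/q₁) + q₁ = (d/q₁ + 1)*q₁ := by ring
    rw [this]
    calc (d/q₁ + 1)*q₁ ≤ a*q₁ := Nat.mul_le_mul_right _ (by omega)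
    _ ≤ G := by omega
  · rename_i h
    have he : d - a*q₁ < c*q₂ := by omega
    have hk : (d - a*q₁)/q₂ < c := Nat.div_lt_of_lt_mul (by rw [mul_comm q₂ c]; omega)
    have : a*q₁ + q₂*((d - a*q₁)/q₂) + q₂ = a*q₁ + ((d - a*q₁)/q₂ + 1)*q₂ := by ring
    rw [this]
    have : ((d - a*q₁)/q₂ + 1)*q₂ ≤ c*q₂ := Nat.mul_le_mul_right _ (by omega)
    omega

include hq₁ hq₂ in
lemma bsv_eq_on_block (d p : ℕ) (h1 : bsv q₁ q₂ a d ≤ p)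
    (h2 : p < bsv q₁ q₂ a d + blv q₁ q₂ a d) :
    bsv q₁ q₂ a p = bsv q₁ q₂ a d ∧ blv q₁ q₂ a p = blv q₁ q₂ a d ∧
      mbv q₁ q₂ a p = mbv q₁ q₂ a d := by
  by_cases h : d < a*q₁
  · have hbs : bsv q₁ q₂ a d = q₁*(d/q₁) := by unfold bsv; rw [if_pos h]
    have hbl : blv q₁ q₂ a d = q₁ := by unfold blv; rw [if_pos h]
    rw [hbs] at h1 h2
    rw [hbl] at h2
    have hk : d/q₁ < a := Nat.div_lt_of_lt_mul (by rwa [mul_comm])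
    have hp : p < a*q₁ := by
      have : q₁*(d/q₁) + q₁ = (d/q₁+1)*q₁ := by ring
      have h3 : (d/q₁+1)*q₁ ≤ a*q₁ := Nat.mul_le_mul_right _ (by omega)
      omega
    have hdiv : p/q₁ = d/q₁ := by
      apply Nat.div_eq_of_lt_le
      · calc d/q₁ * q₁ = q₁*(d/q₁) := by ring
        _ ≤ p := h1
      · calc p < q₁*(d/q₁) + q₁ := h2
        _ = (d/q₁ + 1)*q₁ := by ring
        _ = Nat.succ (d/q₁) * q₁ := by rfl
    unfold bsv blv mbv
    rw [if_pos h, if_pos hp, if_pos hp, if_pos h, if_pos hp, if_pos h, hdiv]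
    exact ⟨rfl, rfl, rfl⟩
  · have hbs : bsv q₁ q₂ a d = a*q₁ + q₂*((d - a*q₁)/q₂) := by unfold bsv; rw [if_neg h]
    have hbl : blv q₁ q₂ a d = q₂ := by unfold blv; rw [if_neg h]
    rw [hbs] at h1 h2
    rw [hbl] at h2
    have hp : ¬ p < a*q₁ := by omega
    have hdiv : (p - a*q₁)/q₂ = (d - a*q₁)/q₂ := by
      apply Nat.div_eq_of_lt_le
      · calc (d - a*q₁)/q₂ * q₂ = q₂*((d - a*q₁)/q₂) := by ring
        _ ≤ p - a*q₁ := by omega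
      · have : p - a*q₁ < q₂*((d - a*q₁)/q₂) + q₂ := by omega
        calc p - a*q₁ < q₂*((d - a*q₁)/q₂) + q₂ := this
        _ = Nat.succ ((d - a*q₁)/q₂) * q₂ := by rw [Nat.succ_mul]; ring
    unfold bsv blv mbv
    rw [if_neg h, if_neg hp, if_neg hp, if_neg h, if_neg hp, if_neg h, hdiv]
    exact ⟨rfl, rfl, rfl⟩

include hq₁ hq₂ in
lemma bsv_sb_zero : bsv q₁ q₂ a 0 = 0 := by
  unfold bsv
  split
  · simp
  · rename_i h
    have : a*q₁ = 0 := by omega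
    simp [this]

include hq₁ hq₂ hrep in
lemma bsv_step (d : ℕ) (hSB : bsv q₁ q₂ a d = d) (hlt : d + blv q₁ q₂ a d < G) :
    bsv q₁ q₂ a (d + blv q₁ q₂ a d) = d + blv q₁ q₂ a d := by
  by_cases h : d < a*q₁
  · have hbl : blv q₁ q₂ a d = q₁ := by unfold blv; rw [if_pos h]
    have hdv : q₁ ∣ d := by
      have : bsv q₁ q₂ a d = q₁*(d/q₁) := by unfold bsv; rw [if_pos h]
      rw [hSB] at this
      exact ⟨d/q₁, this⟩
    obtain ⟨k, hk⟩ := hdv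
    have hka : k < a := by
      by_contra hc
      push_neg at hc
      have : a*q₁ ≤ q₁*k := by
        calc a*q₁ ≤ k*q₁ := Nat.mul_le_mul_right _ hc
        _ = q₁*k := by ring
      omega
    rw [hbl]
    rcases Nat.lt_or_ge (d + q₁) (a*q₁) with h2 | h2
    · unfold bsv
      rw [if_pos h2, hk]
      have : q₁*k + q₁ = q₁*(k+1) := by ring
      rw [this, Nat.mul_div_cancel_left _ hq₁]
    · have h3 : d + q₁ = a*q₁ := by
        have : d + q₁ = q₁*(k+1) := by rw [hk]; ring
        have h4 : q₁*(k+1) ≤ q₁*a := Nat.mul_le_mul_left _ (by omega)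
        have h5 : q₁*a = a*q₁ := by ring
        omega
      unfold bsv
      rw [if_neg (by omega), h3]
      simp
  · have hbl : blv q₁ q₂ a d = q₂ := by unfold blv; rw [if_neg h]
    have hdv : q₂ ∣ (d - a*q₁) := by
      have : bsv q₁ q₂ a d = a*q₁ + q₂*((d - a*q₁)/q₂) := by unfold bsv; rw [if_neg h]
      rw [hSB] at this
      exact ⟨(d - a*q₁)/q₂, by omega⟩
    obtain ⟨k, hk⟩ := hdv
    rw [hbl]
    unfold bsv
    rw [if_neg (by omega)]
    have : d + q₂ - a*q₁ = q₂*(k+1) := by rw [Nat.mul_succ]; omega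
    rw [this, Nat.mul_div_cancel_left _ hq₂]
    omega

lemma add_le_of_dvd_lt {q u v : ℕ} (hq : 0 < q) (h1 : q ∣ u) (h2 : q ∣ v) (h : u < v) :
    u + q ≤ v := by
  obtain ⟨k, hk⟩ := h1
  obtain ⟨m, hm⟩ := h2
  have hkm : k < m := by
    have hh : q*k < q*m := by rw [← hk, ← hm]; exact h
    exact Nat.lt_of_mul_lt_mul_left hh
  have h4 : q*(k+1) ≤ q*m := Nat.mul_le_mul_left _ (by omega)
  have h5 : q*(k+1) = q*k + q := Nat.mul_succ q k
  omega

include hq₁ hq₂ in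
lemma bsv_gap (d e : ℕ) (h1 : bsv q₁ q₂ a d = d) (h2 : bsv q₁ q₂ a e = e)
    (hlt : d < e) : d + blv q₁ q₂ a d ≤ e := by
  by_cases h : d < a*q₁
  · have hbl : blv q₁ q₂ a d = q₁ := by unfold blv; rw [if_pos h]
    have hdv : q₁ ∣ d := by
      have hh : bsv q₁ q₂ a d = q₁*(d/q₁) := by unfold bsv; rw [if_pos h]
      rw [h1] at hh
      exact ⟨d/q₁, hh⟩
    rw [hbl]
    rcases Nat.lt_or_ge e (a*q₁) with he | he
    · have hdv2 : q₁ ∣ e := by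
        have hh : bsv q₁ q₂ a e = q₁*(e/q₁) := by unfold bsv; rw [if_pos he]
        rw [h2] at hh
        exact ⟨e/q₁, hh⟩
      exact add_le_of_dvd_lt hq₁ hdv hdv2 hlt
    · have hdv2 : q₁ ∣ a*q₁ := ⟨a, by ring⟩
      have := add_le_of_dvd_lt hq₁ hdv hdv2 h
      omega
  · have hbl : blv q₁ q₂ a d = q₂ := by unfold blv; rw [if_neg h]
    have hdv : q₂ ∣ (d - a*q₁) := by
      have hh : bsv q₁ q₂ a d = a*q₁ + q₂*((d - a*q₁)/q₂) := by unfold bsv; rw [if_neg h]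
      rw [h1] at hh
      exact ⟨(d - a*q₁)/q₂, by omega⟩
    have hdv2 : q₂ ∣ (e - a*q₁) := by
      have hh : bsv q₁ q₂ a e = a*q₁ + q₂*((e - a*q₁)/q₂) := by
        unfold bsv; rw [if_neg (by omega)]
      rw [h2] at hh
      exact ⟨(e - a*q₁)/q₂, by omega⟩
    rw [hbl]
    have := add_le_of_dvd_lt hq₂ hdv hdv2 (by omega)
    omega

end BlockArith


/-! ### The construction of the continuous equivariant map -/

noncomputable def ABp (q₁ q₂ G : ℕ) : ℕ × ℕ :=
  if h : ∃ p : ℕ × ℕ, G = p.1*q₁ + p.2*q₂ then h.choose else (0,0)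

lemma ABp_spec {q₁ q₂ G : ℕ} (h : ∃ p : ℕ × ℕ, G = p.1*q₁ + p.2*q₂) :
    G = (ABp q₁ q₂ G).1*q₁ + (ABp q₁ q₂ G).2*q₂ := by
  rw [ABp, dif_pos h]
  exact h.choose_spec

section Construction

variable {bb L : ℕ} (y : ℤ → Fin bb) (q₁ q₂ : ℕ)

/-- The marker scale. -/
def KC (q₁ q₂ : ℕ) : ℕ := q₁ * q₂

noncomputable def glen (x : ℤ → Bool) (n : ℤ) : ℕ :=
  (nextM (KC q₁ q₂) x n - prevM (KC q₁ q₂) x n).toNat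

noncomputable def goff (x : ℤ → Bool) (n : ℤ) : ℕ :=
  (n - prevM (KC q₁ q₂) x n).toNat

noncomputable def gA (x : ℤ → Bool) (n : ℤ) : ℕ := (ABp q₁ q₂ (glen q₁ q₂ x n)).1

noncomputable def gC (x : ℤ → Bool) (n : ℤ) : ℕ := (ABp q₁ q₂ (glen q₁ q₂ x n)).2

noncomputable def BS (x : ℤ → Bool) (n : ℤ) : ℕ :=
  bsv q₁ q₂ (gA q₁ q₂ x n) (goff q₁ q₂ x n)

noncomputable def BLf (x : ℤ → Bool) (n : ℤ) : ℕ :=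
  blv q₁ q₂ (gA q₁ q₂ x n) (goff q₁ q₂ x n)

noncomputable def MBf (x : ℤ → Bool) (n : ℤ) : ℕ :=
  mbv q₁ q₂ (gA q₁ q₂ x n) (goff q₁ q₂ x n)

noncomputable def bstartZ (x : ℤ → Bool) (n : ℤ) : ℤ :=
  prevM (KC q₁ q₂) x n + BS q₁ q₂ x n

noncomputable def Zf (x : ℤ → Bool) : ℤ → Fin bb := fun n =>
  y ((MBf q₁ q₂ x n : ℤ) + ((goff q₁ q₂ x n : ℤ) - (BS q₁ q₂ x n : ℤ)))

variable (hq₁ : 0 < q₁) (hq₂ : 0 < q₂) (hco : Nat.Coprime q₁ q₂)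
variable {x : ℤ → Bool} (hx : x ∈ FreePart)

include hx in
lemma goff_cast (n : ℤ) : (goff q₁ q₂ x n : ℤ) = n - prevM (KC q₁ q₂) x n := by
  rw [goff, Int.toNat_of_nonneg]
  have := prevM_le (K := KC q₁ q₂) hx n
  omega

include hx in
lemma glen_cast (n : ℤ) :
    (glen q₁ q₂ x n : ℤ) = nextM (KC q₁ q₂) x n - prevM (KC q₁ q₂) x n := by
  rw [glen, Int.toNat_of_nonneg]
  have h1 := prevM_le (K := KC q₁ q₂) hx n
  have h2 := nextM_gt (K := KC q₁ q₂) hx n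
  omega

include hx in
lemma glen_big (n : ℤ) : q₁ * q₂ < glen q₁ q₂ x n := by
  have h := gap_min (K := KC q₁ q₂) hx n
  have h2 := glen_cast q₁ q₂ hx n
  simp only [KC] at h h2 ⊢
  omega

include hx hq₁ hq₂ hco in
lemma glen_rep (n : ℤ) :
    glen q₁ q₂ x n = gA q₁ q₂ x n * q₁ + gC q₁ q₂ x n * q₂ := by
  have h := glen_big q₁ q₂ hx n
  obtain ⟨a, c, hac⟩ := rep_lemma hq₁ hq₂ hco (G := glen q₁ q₂ x n) (by omega)
  exact ABp_spec ⟨(a, c), hac⟩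

include hx in
lemma goff_lt_glen (n : ℤ) : goff q₁ q₂ x n < glen q₁ q₂ x n := by
  have h1 := goff_cast q₁ q₂ hx n
  have h2 := glen_cast q₁ q₂ hx n
  have h3 := nextM_gt (K := KC q₁ q₂) hx n
  omega

include hx hq₁ hq₂ in
lemma block_bounds (n : ℤ) :
    bstartZ q₁ q₂ x n ≤ n ∧ n < bstartZ q₁ q₂ x n + BLf q₁ q₂ x n := by
  have h1 := bsv_le (q₁ := q₁) (q₂ := q₂) (a := gA q₁ q₂ x n) (goff q₁ q₂ x n)
  have h2 := bsv_lt (q₁ := q₁) (q₂ := q₂) (a := gA q₁ q₂ x n) hq₁ hq₂ (goff q₁ q₂ x n)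
  have h3 := goff_cast q₁ q₂ hx n
  constructor
  · rw [bstartZ]
    have : (BS q₁ q₂ x n : ℤ) ≤ (goff q₁ q₂ x n : ℤ) := by exact_mod_cast h1
    omega
  · rw [bstartZ]
    have : (goff q₁ q₂ x n : ℤ) < (BS q₁ q₂ x n : ℤ) + (BLf q₁ q₂ x n : ℤ) := by
      exact_mod_cast h2
    omega

include hx hq₁ hq₂ hco in
lemma block_end_le (n : ℤ) : BS q₁ q₂ x n + BLf q₁ q₂ x n ≤ glen q₁ q₂ x n := by
  exact bsv_end_le hq₁ hq₂ (glen_rep q₁ q₂ hq₁ hq₂ hco hx n)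
    (goff q₁ q₂ x n) (goff_lt_glen q₁ q₂ hx n)

include hx hq₁ hq₂ hco in
lemma same_block (n p : ℤ) (h1 : bstartZ q₁ q₂ x n ≤ p)
    (h2 : p < bstartZ q₁ q₂ x n + BLf q₁ q₂ x n) :
    prevM (KC q₁ q₂) x p = prevM (KC q₁ q₂) x n ∧
    glen q₁ q₂ x p = glen q₁ q₂ x n ∧
    BS q₁ q₂ x p = BS q₁ q₂ x n ∧
    BLf q₁ q₂ x p = BLf q₁ q₂ x n ∧
    MBf q₁ q₂ x p = MBf q₁ q₂ x n ∧
    bstartZ q₁ q₂ x p = bstartZ q₁ q₂ x n := by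
  have hgc := goff_cast q₁ q₂ hx n
  have hlc := glen_cast q₁ q₂ hx n
  have hble := block_end_le q₁ q₂ hq₁ hq₂ hco hx n
  have hbsle := bsv_le (q₁ := q₁) (q₂ := q₂) (a := gA q₁ q₂ x n) (goff q₁ q₂ x n)
  -- p is in the same gap
  have hp1 : prevM (KC q₁ q₂) x n ≤ p := by
    rw [bstartZ] at h1
    have : (0:ℤ) ≤ (BS q₁ q₂ x n : ℤ) := by positivity
    omega
  have hp2 : p < nextM (KC q₁ q₂) x n := by
    rw [bstartZ] at h2
    have : (BS q₁ q₂ x n : ℤ) + (BLf q₁ q₂ x n : ℤ) ≤ (glen q₁ q₂ x n : ℤ) := by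
      exact_mod_cast hble
    omega
  have hprev : prevM (KC q₁ q₂) x p = prevM (KC q₁ q₂) x n := prevM_gap_const hx hp1 hp2
  have hnext : nextM (KC q₁ q₂) x p = nextM (KC q₁ q₂) x n := nextM_gap_const hx hp1 hp2
  have hglen : glen q₁ q₂ x p = glen q₁ q₂ x n := by rw [glen, glen, hprev, hnext]
  have hgA : gA q₁ q₂ x p = gA q₁ q₂ x n := by rw [gA, gA, hglen]
  have hgoffp : (goff q₁ q₂ x p : ℤ) = p - prevM (KC q₁ q₂) x n := by
    rw [goff_cast q₁ q₂ hx p, hprev]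
  -- offset bounds
  have hoff1 : BS q₁ q₂ x n ≤ goff q₁ q₂ x p := by
    have : (BS q₁ q₂ x n : ℤ) ≤ (goff q₁ q₂ x p : ℤ) := by
      rw [hgoffp]; rw [bstartZ] at h1; omega
    exact_mod_cast this
  have hoff2 : goff q₁ q₂ x p < BS q₁ q₂ x n + BLf q₁ q₂ x n := by
    have : (goff q₁ q₂ x p : ℤ) < (BS q₁ q₂ x n : ℤ) + (BLf q₁ q₂ x n : ℤ) := by
      rw [hgoffp]; rw [bstartZ] at h2; push_cast; omega
    exact_mod_cast this
  have heq := bsv_eq_on_block (q₁ := q₁) (q₂ := q₂) (a := gA q₁ q₂ x n) hq₁ hq₂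
    (goff q₁ q₂ x n) (goff q₁ q₂ x p) hoff1 hoff2
  have hBSp : BS q₁ q₂ x p = BS q₁ q₂ x n := by
    unfold BS; rw [hgA]; exact heq.1
  have hBLp : BLf q₁ q₂ x p = BLf q₁ q₂ x n := by
    unfold BLf; rw [hgA]; exact heq.2.1
  have hMBp : MBf q₁ q₂ x p = MBf q₁ q₂ x n := by
    unfold MBf; rw [hgA]; exact heq.2.2
  refine ⟨hprev, hglen, hBSp, hBLp, hMBp, ?_⟩
  unfold bstartZ
  rw [hprev, hBSp]

include hx hq₁ hq₂ hco in
lemma Zf_block_val (n p : ℤ) (h1 : bstartZ q₁ q₂ x n ≤ p)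
    (h2 : p < bstartZ q₁ q₂ x n + BLf q₁ q₂ x n) :
    Zf y q₁ q₂ x p = y ((MBf q₁ q₂ x n : ℤ) + (p - bstartZ q₁ q₂ x n)) := by
  obtain ⟨hprev, hglen, hBS, hBL, hMB, hbst⟩ := same_block q₁ q₂ hq₁ hq₂ hco hx n p h1 h2
  rw [Zf, hMB]
  congr 2
  have hgoffp : (goff q₁ q₂ x p : ℤ) = p - prevM (KC q₁ q₂) x n := by
    rw [goff_cast q₁ q₂ hx p, hprev]
  rw [hBS, hgoffp, bstartZ]
  push_cast
  ring

/-! ### Sub-boundaries -/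

noncomputable def SBP (x : ℤ → Bool) (β : ℤ) : Prop :=
  BS q₁ q₂ x β = goff q₁ q₂ x β

include hx hq₁ hq₂ hco in
lemma SBP_bstart (n : ℤ) : SBP q₁ q₂ x (bstartZ q₁ q₂ x n) := by
  have hb := block_bounds q₁ q₂ hq₁ hq₂ hx n
  obtain ⟨hprev, hglen, hBS, hBL, hMB, hbst⟩ :=
    same_block q₁ q₂ hq₁ hq₂ hco hx n (bstartZ q₁ q₂ x n)
      le_rfl (by have := bsv_lt (q₁ := q₁) (q₂ := q₂) (a := gA q₁ q₂ x n) hq₁ hq₂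
                   (goff q₁ q₂ x n)
                 have h0 : (0:ℤ) < (BLf q₁ q₂ x n : ℤ) := by
                   rw [BLf]; unfold blv; split <;> [exact_mod_cast hq₁; exact_mod_cast hq₂]
                 omega)
  rw [SBP, hBS]
  have : (goff q₁ q₂ x (bstartZ q₁ q₂ x n) : ℤ) = (BS q₁ q₂ x n : ℤ) := by
    rw [goff_cast q₁ q₂ hx _, hprev, bstartZ]; ring
  exact_mod_cast this.symm

include hx hq₁ hq₂ in
lemma SBP_marker (n : ℤ) : SBP q₁ q₂ x (nextM (KC q₁ q₂) x n) := by
  have hmk := nextM_isMk (K := KC q₁ q₂) hx n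
  have hprev : prevM (KC q₁ q₂) x (nextM (KC q₁ q₂) x n) = nextM (KC q₁ q₂) x n :=
    prevM_self hx hmk
  have hoff : goff q₁ q₂ x (nextM (KC q₁ q₂) x n) = 0 := by
    rw [goff, hprev]; simp
  rw [SBP, hoff, BS, hoff]
  exact bsv_sb_zero hq₁ hq₂

include hx hq₁ hq₂ hco in
lemma BLf_pos (n : ℤ) : 0 < BLf q₁ q₂ x n := by
  rw [BLf]; unfold blv; split <;> [exact hq₁; exact hq₂]

include hx hq₁ hq₂ hco in
lemma SBP_bstart_eq (β : ℤ) (h : SBP q₁ q₂ x β) : bstartZ q₁ q₂ x β = β := by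
  rw [bstartZ, h, goff_cast q₁ q₂ hx]; ring

include hx hq₁ hq₂ hco in
lemma SBP_step (β : ℤ) (h : SBP q₁ q₂ x β) :
    SBP q₁ q₂ x (β + BLf q₁ q₂ x β) := by
  have hend := block_end_le q₁ q₂ hq₁ hq₂ hco hx β
  rcases Nat.lt_or_ge (goff q₁ q₂ x β + BLf q₁ q₂ x β) (glen q₁ q₂ x β) with hlt | hge
  · -- stays in the same gap
    set p := β + (BLf q₁ q₂ x β : ℤ) with hp
    have hgoffβ := goff_cast q₁ q₂ hx β
    have hglenβ := glen_cast q₁ q₂ hx β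
    have hp1 : prevM (KC q₁ q₂) x β ≤ p := by
      have := prevM_le (K := KC q₁ q₂) hx β
      have h0 : (0:ℤ) ≤ (BLf q₁ q₂ x β : ℤ) := by positivity
      omega
    have hp2 : p < nextM (KC q₁ q₂) x β := by
      have : (goff q₁ q₂ x β : ℤ) + (BLf q₁ q₂ x β : ℤ) < (glen q₁ q₂ x β : ℤ) := by
        exact_mod_cast hlt
      omega
    have hprev : prevM (KC q₁ q₂) x p = prevM (KC q₁ q₂) x β := prevM_gap_const hx hp1 hp2
    have hnext : nextM (KC q₁ q₂) x p = nextM (KC q₁ q₂) x β := nextM_gap_const hx hp1 hp2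
    have hglen : glen q₁ q₂ x p = glen q₁ q₂ x β := by rw [glen, glen, hprev, hnext]
    have hgA : gA q₁ q₂ x p = gA q₁ q₂ x β := by rw [gA, gA, hglen]
    have hoffp : goff q₁ q₂ x p = goff q₁ q₂ x β + BLf q₁ q₂ x β := by
      have : (goff q₁ q₂ x p : ℤ) = (goff q₁ q₂ x β : ℤ) + (BLf q₁ q₂ x β : ℤ) := by
        rw [goff_cast q₁ q₂ hx p, hprev]; omega
      exact_mod_cast this
    rw [SBP] at h ⊢
    rw [BS, hgA, hoffp]
    -- now pure arithmetic: bsv_step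
    have hstep := bsv_step (q₁ := q₁) (q₂ := q₂) (a := gA q₁ q₂ x β) hq₁ hq₂
      (glen_rep q₁ q₂ hq₁ hq₂ hco hx β) (goff q₁ q₂ x β)
      (by rw [BS] at h; exact h)
      (by rw [show blv q₁ q₂ (gA q₁ q₂ x β) (goff q₁ q₂ x β) = BLf q₁ q₂ x β from rfl]
          exact hlt)
    rw [show blv q₁ q₂ (gA q₁ q₂ x β) (goff q₁ q₂ x β) = BLf q₁ q₂ x β from rfl] at hstep
    exact hstep
  · -- lands on the next marker
    have hend' : goff q₁ q₂ x β + BLf q₁ q₂ x β ≤ glen q₁ q₂ x β := by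
      rw [SBP] at h; rw [← h]; exact hend
    have heq : goff q₁ q₂ x β + BLf q₁ q₂ x β = glen q₁ q₂ x β := le_antisymm hend' hge
    have hpos : β + (BLf q₁ q₂ x β : ℤ) = nextM (KC q₁ q₂) x β := by
      have h1 := goff_cast q₁ q₂ hx β
      have h2 := glen_cast q₁ q₂ hx β
      have : (goff q₁ q₂ x β : ℤ) + (BLf q₁ q₂ x β : ℤ) = (glen q₁ q₂ x β : ℤ) := by
        exact_mod_cast heq
      omega
    rw [hpos]
    exact SBP_marker q₁ q₂ hq₁ hq₂ hx β

include hx hq₁ hq₂ hco in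
lemma SBP_spacing (β β' : ℤ) (h : SBP q₁ q₂ x β) (h' : SBP q₁ q₂ x β')
    (hlt : β < β') : β + BLf q₁ q₂ x β ≤ β' := by
  have hend := block_end_le q₁ q₂ hq₁ hq₂ hco hx β
  have h1 := goff_cast q₁ q₂ hx β
  have h2 := glen_cast q₁ q₂ hx β
  rcases lt_or_ge β' (nextM (KC q₁ q₂) x β) with hc | hc
  · -- same gap
    have hp1 : prevM (KC q₁ q₂) x β ≤ β' := by
      have := prevM_le (K := KC q₁ q₂) hx β
      omega
    have hprev : prevM (KC q₁ q₂) x β' = prevM (KC q₁ q₂) x β := prevM_gap_const hx hp1 hc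
    have hnext : nextM (KC q₁ q₂) x β' = nextM (KC q₁ q₂) x β := nextM_gap_const hx hp1 hc
    have hglen : glen q₁ q₂ x β' = glen q₁ q₂ x β := by rw [glen, glen, hprev, hnext]
    have hgA : gA q₁ q₂ x β' = gA q₁ q₂ x β := by rw [gA, gA, hglen]
    have hoffβ' : (goff q₁ q₂ x β' : ℤ) = (goff q₁ q₂ x β : ℤ) + (β' - β) := by
      rw [goff_cast q₁ q₂ hx β', hprev]; omega
    have hoffβ'lt : goff q₁ q₂ x β < goff q₁ q₂ x β' := by
      have : (goff q₁ q₂ x β : ℤ) < (goff q₁ q₂ x β' : ℤ) := by omega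
      exact_mod_cast this
    have hgap := bsv_gap (q₁ := q₁) (q₂ := q₂) (a := gA q₁ q₂ x β) hq₁ hq₂
      (goff q₁ q₂ x β) (goff q₁ q₂ x β')
      (by rw [SBP, BS] at h; exact h)
      (by rw [SBP, BS, hgA] at h'; exact h')
      hoffβ'lt
    have : (goff q₁ q₂ x β : ℤ) + (BLf q₁ q₂ x β : ℤ) ≤ (goff q₁ q₂ x β' : ℤ) := by
      exact_mod_cast hgap
    omega
  · -- later gap
    have : (goff q₁ q₂ x β : ℤ) + (BLf q₁ q₂ x β : ℤ) ≤ (glen q₁ q₂ x β : ℤ) := by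
      have : (BS q₁ q₂ x β : ℤ) + (BLf q₁ q₂ x β : ℤ) ≤ (glen q₁ q₂ x β : ℤ) := by
        exact_mod_cast hend
      rw [SBP] at h
      have hh : (BS q₁ q₂ x β : ℤ) = (goff q₁ q₂ x β : ℤ) := by exact_mod_cast h
      omega
    omega


/-! ### Periodicity transfer along sub-boundaries -/

lemma MBBL_cases (x : ℤ → Bool) (n : ℤ) :
    (MBf q₁ q₂ x n = 0 ∧ BLf q₁ q₂ x n = q₁) ∨
    (MBf q₁ q₂ x n = q₁ ∧ BLf q₁ q₂ x n = q₂) := by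
  rw [MBf, BLf]; unfold mbv blv; split
  · exact Or.inl ⟨rfl, rfl⟩
  · exact Or.inr ⟨rfl, rfl⟩

variable (hper1 : ∀ t : ℤ, |t| ≤ (L:ℤ) → y (t + q₁) = y t)
variable (hper2 : ∀ t : ℤ, |t| ≤ (L:ℤ) → y (t + (q₁ + q₂)) = y t)

include hper1 in
lemma yC1 (e : ℤ) (h1 : 0 ≤ e) (h2 : e ≤ (L:ℤ)) : y ((q₁:ℤ) + e) = y e := by
  have := hper1 e (by rw [abs_le]; omega)
  rwa [add_comm] at this

include hper1 hper2 in
lemma yC2 (e : ℤ) (h1 : 0 ≤ e) (h2 : e ≤ (L:ℤ)) : y ((q₁:ℤ) + (q₂:ℤ) + e) = y e := by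
  rw [show (q₁:ℤ) + (q₂:ℤ) + e = e + ((q₁:ℤ) + (q₂:ℤ)) by ring]
  exact hper2 e (by rw [abs_le]; omega)

include hper1 in
lemma yD1 (t : ℤ) (h1 : (q₁:ℤ) ≤ t) (h2 : t ≤ (L:ℤ)) : y t = y (t - q₁) := by
  have := yC1 y q₁ hper1 (t - q₁) (by omega) (by omega)
  rw [show (q₁:ℤ) + (t - q₁) = t by ring] at this
  exact this.symm.symm ▸ this

include hper1 hper2 in
lemma yD2 (t : ℤ) (h1 : (q₂:ℤ) ≤ t) (h2 : t ≤ (L:ℤ)) : y t = y (t - q₂) := by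
  have hA := yC2 y q₁ q₂ hper1 hper2 (t - q₂) (by omega) (by omega)
  have hB := yC1 y q₁ hper1 t (by omega) (by omega)
  rw [show (q₁:ℤ) + (q₂:ℤ) + (t - q₂) = (q₁:ℤ) + t by ring] at hA
  rw [← hB, hA]

include hx hq₁ hq₂ hco hper1 hper2 in
lemma claimD : ∀ N : ℕ, ∀ β β' : ℤ, SBP q₁ q₂ x β → SBP q₁ q₂ x β' → β ≤ β' →
    β' - β ≤ (N:ℤ) → ∀ d : ℤ, β' - β ≤ d → d ≤ (L:ℤ) → y d = y (d - (β' - β)) := by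
  intro N
  induction N with
  | zero =>
    intro β β' _ _ h1 h2 d _ _
    have : β' - β = 0 := by omega
    rw [this]
    simp
  | succ N IH =>
    intro β β' hSB hSB' h1 h2 d hd1 hd2
    rcases eq_or_lt_of_le h1 with heq | hlt
    · rw [← heq]
      simp
    · have hsp := SBP_spacing q₁ q₂ hq₁ hq₂ hco hx β β' hSB hSB' hlt
      set β₁ := β + (BLf q₁ q₂ x β : ℤ) with hβ₁
      have hSB1 : SBP q₁ q₂ x β₁ := SBP_step q₁ q₂ hq₁ hq₂ hco hx β hSB
      have hBLpos : 0 < BLf q₁ q₂ x β := BLf_pos q₁ q₂ hq₁ hq₂ hco hx β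
      have hBLle : (BLf q₁ q₂ x β : ℤ) ≤ β' - β := by omega
      have hstep : y d = y (d - (BLf q₁ q₂ x β : ℤ)) := by
        rcases MBBL_cases q₁ q₂ x β with ⟨_, hBL⟩ | ⟨_, hBL⟩
        · rw [hBL]
          exact yD1 y q₁ hper1 d (by rw [hBL] at hBLle; omega) hd2
        · rw [hBL]
          exact yD2 y q₁ q₂ hper1 hper2 d (by rw [hBL] at hBLle; omega) hd2
      have hIH := IH β₁ β' hSB1 hSB' (by omega) (by omega)
        (d - (BLf q₁ q₂ x β : ℤ)) (by omega) (by omega)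
      rw [hstep, hIH]
      congr 1
      ring

include hx hq₁ hq₂ hco hper1 hper2 in
lemma master (n : ℤ) : ∃ m : ℤ, ∀ t : ℤ, 0 ≤ t → t < (L:ℤ) →
    Zf y q₁ q₂ x (n + t) = y (m + t) := by
  set β := bstartZ q₁ q₂ x n with hβ
  obtain ⟨hb1, hb2⟩ := block_bounds q₁ q₂ hq₁ hq₂ hx n
  refine ⟨(MBf q₁ q₂ x n : ℤ) + (n - β), ?_⟩
  intro t ht1 ht2
  by_cases hcase : n + t < β + (BLf q₁ q₂ x n : ℤ)
  · have hv := Zf_block_val y q₁ q₂ hq₁ hq₂ hco hx n (n + t) (by omega) hcase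
    rw [hv]
    congr 1
    ring
  · push_neg at hcase
    set β₁ := β + (BLf q₁ q₂ x n : ℤ) with hβ₁
    have hSBβ : SBP q₁ q₂ x β := SBP_bstart q₁ q₂ hq₁ hq₂ hco hx n
    have hBLβ : BLf q₁ q₂ x β = BLf q₁ q₂ x n :=
      (same_block q₁ q₂ hq₁ hq₂ hco hx n β le_rfl (by
        have := BLf_pos q₁ q₂ hq₁ hq₂ hco hx n
        have h0 : (0:ℤ) < (BLf q₁ q₂ x n : ℤ) := by exact_mod_cast this
        omega)).2.2.2.1
    have hSB1 : SBP q₁ q₂ x β₁ := by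
      have := SBP_step q₁ q₂ hq₁ hq₂ hco hx β hSBβ
      rwa [hBLβ] at this
    set d := n + t - β₁ with hd
    have hd0 : 0 ≤ d := by omega
    have hdL : d ≤ (L:ℤ) - 1 := by omega
    have hsub : Zf y q₁ q₂ x (β₁ + d) = y d := by
      set p := β₁ + d with hp
      set β' := bstartZ q₁ q₂ x p with hβ'
      obtain ⟨hb1', hb2'⟩ := block_bounds q₁ q₂ hq₁ hq₂ hx p
      have hSB' : SBP q₁ q₂ x β' := SBP_bstart q₁ q₂ hq₁ hq₂ hco hx p
      have hBLβ' : BLf q₁ q₂ x β' = BLf q₁ q₂ x p :=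
        (same_block q₁ q₂ hq₁ hq₂ hco hx p β' le_rfl (by
          have := BLf_pos q₁ q₂ hq₁ hq₂ hco hx p
          have h0 : (0:ℤ) < (BLf q₁ q₂ x p : ℤ) := by exact_mod_cast this
          omega)).2.2.2.1
      have hβ'ge : β₁ ≤ β' := by
        by_contra hcon
        push_neg at hcon
        have hspc := SBP_spacing q₁ q₂ hq₁ hq₂ hco hx β' β₁ hSB' hSB1 hcon
        rw [hBLβ'] at hspc
        omega
      have hv := Zf_block_val y q₁ q₂ hq₁ hq₂ hco hx p p hb1' hb2'
      set e := p - β' with he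
      have he0 : 0 ≤ e := by omega
      have hed : e ≤ d := by omega
      have hye : y ((MBf q₁ q₂ x p : ℤ) + e) = y e := by
        rcases MBBL_cases q₁ q₂ x p with ⟨hMB, _⟩ | ⟨hMB, _⟩
        · rw [hMB]; simp
        · rw [hMB]
          exact yC1 y q₁ hper1 e he0 (by omega)
      have hcd := claimD y q₁ q₂ hq₁ hq₂ hco hx hper1 hper2 (β' - β₁).toNat β₁ β'
        hSB1 hSB' hβ'ge (by omega) d (by omega) (by omega)
      have hde : d - (β' - β₁) = e := by omega
      rw [hv, hye]
      rw [hde] at hcd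
      exact hcd.symm
    have hyd : y ((MBf q₁ q₂ x n : ℤ) + (BLf q₁ q₂ x n : ℤ) + d) = y d := by
      rcases MBBL_cases q₁ q₂ x n with ⟨hMB, hBL⟩ | ⟨hMB, hBL⟩
      · rw [hMB, hBL]
        have := yC1 y q₁ hper1 d hd0 (by omega)
        simpa using this
      · rw [hMB, hBL]
        exact yC2 y q₁ q₂ hper1 hper2 d hd0 (by omega)
    have hnt : n + t = β₁ + d := by omega
    have hmt : (MBf q₁ q₂ x n : ℤ) + (n - β) + t =
        (MBf q₁ q₂ x n : ℤ) + (BLf q₁ q₂ x n : ℤ) + d := by omega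
    rw [hnt, hsub, hmt, hyd]


include hx in
lemma Zf_shift (s n : ℤ) : Zf y q₁ q₂ (shift s x) n = Zf y q₁ q₂ x (n + s) := by
  have hp := prevM_shift (K := KC q₁ q₂) hx s n
  have hn := nextM_shift (K := KC q₁ q₂) hx s n
  have hglen : glen q₁ q₂ (shift s x) n = glen q₁ q₂ x (n + s) := by
    rw [glen, glen, hp, hn]; congr 1; ring
  have hgoff : goff q₁ q₂ (shift s x) n = goff q₁ q₂ x (n + s) := by
    rw [goff, goff, hp]; congr 1; ring
  have hgA : gA q₁ q₂ (shift s x) n = gA q₁ q₂ x (n + s) := by rw [gA, gA, hglen]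
  rw [Zf, Zf, MBf, MBf, BS, BS, hgA, hgoff]

include hx in
lemma Zf_local (n : ℤ) : ∃ r : ℕ, ∀ x' : ℤ → Bool,
    (∀ j : ℤ, |j| ≤ (r:ℤ) → x j = x' j) → Zf y q₁ q₂ x' n = Zf y q₁ q₂ x n := by
  classical
  set K := KC q₁ q₂ with hK
  have hPN : ∀ i : ℤ, ∃ p : ℤ, ∃ st : ℕ, |p - i| ≤ (K:ℤ) ∧ Mk K st (shift p x) := by
    intro i
    obtain ⟨p, h1, h2, h3⟩ := marker_near (K := K) hx i
    obtain ⟨st, hst⟩ := h3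
    exact ⟨p, st, by rw [abs_le]; omega, hst⟩
  choose pf stf hpf hmkf using hPN
  set W : Finset ℤ := Finset.Icc (n - 2*K) (n + 2*K + 1) with hW
  set r : ℕ := W.sup (fun i => Rad K (stf i) + i.natAbs + K) with hr
  refine ⟨r, ?_⟩
  intro x' hagree
  have key : ∀ i ∈ W, (IsMk K (shift i x') ↔ IsMk K (shift i x)) := by
    intro i hiW
    have hri : Rad K (stf i) + i.natAbs + K ≤ r :=
      Finset.le_sup (f := fun i : ℤ => Rad K (stf i) + i.natAbs + K) hiW
    constructor
    · intro h'
      by_contra hno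
      have hpne : pf i ≠ i := by
        intro hcon
        have hh : IsMk K (shift (pf i) x) := ⟨stf i, hmkf i⟩
        rw [hcon] at hh
        exact hno hh
      have hmk' : Mk K (stf i) (shift (pf i) x') := by
        apply mk_local (stf i) _ (hmkf i)
        intro j hj
        simp only [shift]
        apply hagree
        have h1 := hpf i
        have hriZ : (Rad K (stf i) : ℤ) + i.natAbs + K ≤ (r:ℤ) := by exact_mod_cast hri
        rw [abs_le] at h1 hj ⊢
        omega
      have hhh : IsMk K (shift (pf i) x') := ⟨stf i, hmk'⟩
      exact isMk_apart (K := K) hhh h' hpne (hpf i)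
    · intro h
      have hpeq : pf i = i := by
        by_contra hcon
        have hA : IsMk K (shift (pf i) x) := ⟨stf i, hmkf i⟩
        exact isMk_apart (K := K) hA h hcon (hpf i)
      have hmk0 : Mk K (stf i) (shift i x) := by
        have hB := hmkf i
        rwa [hpeq] at hB
      refine ⟨stf i, ?_⟩
      apply mk_local (stf i) _ hmk0
      intro j hj
      simp only [shift]
      apply hagree
      have hriZ : (Rad K (stf i) : ℤ) + i.natAbs + K ≤ (r:ℤ) := by exact_mod_cast hri
      rw [abs_le] at hj ⊢
      omega
  have hSeq : Sset K x' n = Sset K x n := by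
    apply Finset.ext
    intro i
    simp only [Sset, Finset.mem_filter, Finset.mem_Icc]
    constructor
    · rintro ⟨h1, h2⟩
      exact ⟨h1, (key i (Finset.mem_Icc.mpr ⟨by omega, by omega⟩)).1 h2⟩
    · rintro ⟨h1, h2⟩
      exact ⟨h1, (key i (Finset.mem_Icc.mpr ⟨by omega, by omega⟩)).2 h2⟩
  have hTeq : Tset K x' n = Tset K x n := by
    apply Finset.ext
    intro i
    simp only [Tset, Finset.mem_filter, Finset.mem_Icc]
    constructor
    · rintro ⟨h1, h2⟩
      exact ⟨h1, (key i (Finset.mem_Icc.mpr ⟨by omega, by omega⟩)).1 h2⟩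
    · rintro ⟨h1, h2⟩
      exact ⟨h1, (key i (Finset.mem_Icc.mpr ⟨by omega, by omega⟩)).2 h2⟩
  have hprev : prevM K x' n = prevM K x n := by rw [prevM, prevM, hSeq]
  have hnext : nextM K x' n = nextM K x n := by rw [nextM, nextM, hTeq]
  have hKK : KC q₁ q₂ = K := rfl
  have hglen : glen q₁ q₂ x' n = glen q₁ q₂ x n := by
    rw [glen, glen, hKK, hprev, hnext]
  have hgoff : goff q₁ q₂ x' n = goff q₁ q₂ x n := by
    rw [goff, goff, hKK, hprev]
  have hgA : gA q₁ q₂ x' n = gA q₁ q₂ x n := by rw [gA, gA, hglen]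
  rw [Zf, Zf, MBf, MBf, BS, BS, hgA, hgoff]

include hx hq₁ hq₂ hco hper1 hper2 in
lemma Zf_SFT {k : ℕ} (P : Fin k → Fin L → Fin bb) (hy : y ∈ SFT P) :
    Zf y q₁ q₂ x ∈ SFT P := by
  intro j hj
  obtain ⟨m0, hm⟩ := hj
  obtain ⟨m, hmaster⟩ := master y q₁ q₂ hq₁ hq₂ hco hx hper1 hper2 m0
  apply hy j
  refine ⟨m, ?_⟩
  intro i
  rw [← hmaster (i:ℤ) (by positivity) (by exact_mod_cast i.2)]
  exact hm i

end Construction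

/-! ### Baire-category extraction from a Borel equivariant map -/

section Extraction

open TopologicalSpace

lemma shift_continuous {α : Type*} [TopologicalSpace α] (s : ℤ) :
    Continuous (shift s : (ℤ → α) → (ℤ → α)) :=
  continuous_pi (fun n => continuous_apply (n + s))

noncomputable def homeoShift (s : ℤ) : (ℤ → Bool) ≃ₜ (ℤ → Bool) where
  toFun := shift s
  invFun := shift (-s)
  left_inv := fun x => by rw [shift_shift, show s + -s = 0 by ring, shift_zero]
  right_inv := fun x => by rw [shift_shift, show -s + s = 0 by ring, shift_zero]
  continuous_toFun := shift_continuous s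
  continuous_invFun := shift_continuous (-s)

lemma isOpen_coord_ne (a c : ℤ) : IsOpen {x : ℤ → Bool | x a ≠ x c} := by
  have : Continuous (fun x : ℤ → Bool => (x a, x c)) :=
    (continuous_apply a).prodMk (continuous_apply c)
  exact (isOpen_discrete {p : Bool × Bool | p.1 ≠ p.2}).preimage this

lemma isClopen_coord_eq (a c : ℤ) : IsOpen {x : ℤ → Bool | x a = x c} := by
  have : Continuous (fun x : ℤ → Bool => (x a, x c)) :=
    (continuous_apply a).prodMk (continuous_apply c)
  exact (isOpen_discrete {p : Bool × Bool | p.1 = p.2}).preimage this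

lemma isOpen_shift_ne (s : ℤ) : IsOpen {x : ℤ → Bool | shift s x ≠ x} := by
  have : {x : ℤ → Bool | shift s x ≠ x} = ⋃ n : ℤ, {x | x (n + s) ≠ x n} := by
    ext x
    simp only [Set.mem_setOf_eq, Set.mem_iUnion, Function.ne_iff]
    rfl
  rw [this]
  exact isOpen_iUnion (fun n => isOpen_coord_ne (n + s) n)

lemma dense_shift_ne {s : ℤ} (hs : s ≠ 0) : Dense {x : ℤ → Bool | shift s x ≠ x} := by
  rw [dense_iff_inter_open]
  intro U hU ⟨x₀, hx₀⟩
  obtain ⟨I, u, hu, hpi⟩ := (isOpen_pi_iff.mp hU) x₀ hx₀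
  set N : ℕ := I.sup (fun i => i.natAbs) with hN
  set n₀ : ℤ := (N:ℤ) + 1 + s.natAbs with hn₀
  set x' : ℤ → Bool := fun n => if n = n₀ + s then !(x₀ n₀) else x₀ n with hx'
  have hIbound : ∀ i ∈ I, i.natAbs ≤ N := fun i hi => Finset.le_sup (f := fun i : ℤ => i.natAbs) hi
  have hne : ∀ i ∈ I, i ≠ n₀ + s := by
    intro i hi hcon
    have h1 := hIbound i hi
    omega
  have hagree : ∀ i ∈ I, x' i = x₀ i := by
    intro i hi
    rw [hx']
    simp only
    rw [if_neg (hne i hi)]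
  refine ⟨x', ?_, ?_⟩
  · apply hpi
    intro i hi
    rw [hagree i hi]
    exact (hu i hi).2
  · simp only [Set.mem_setOf_eq, Function.ne_iff]
    refine ⟨n₀, ?_⟩
    have h1 : shift s x' n₀ = x' (n₀ + s) := rfl
    have h2 : x' (n₀ + s) = !(x₀ n₀) := by rw [hx']; simp
    have h3 : x' n₀ = x₀ n₀ := by
      rw [hx']
      simp only
      rw [if_neg (by omega)]
    rw [h1, h2, h3]
    simp

lemma freePart_residual : FreePart ∈ residual (ℤ → Bool) := by
  have : FreePart = ⋂ (s : ℤ), ⋂ (_ : s ≠ 0), {x : ℤ → Bool | shift s x ≠ x} := by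
    ext x
    simp only [FreePart, Set.mem_setOf_eq, Set.mem_iInter]
  rw [this]
  rw [countable_iInter_mem]
  intro s
  by_cases hs : s = 0
  · subst hs
    have h0 : (⋂ (_ : (0:ℤ) ≠ 0), {x : ℤ → Bool | shift 0 x ≠ x}) = Set.univ := by simp
    rw [h0]
    exact Filter.univ_mem
  · have h0 : (⋂ (_ : s ≠ 0), {x : ℤ → Bool | shift s x ≠ x})
        = {x : ℤ → Bool | shift s x ≠ x} := by simp [hs]
    rw [h0]
    exact residual_of_dense_open (isOpen_shift_ne s) (dense_shift_ne hs)

/-- The recurrence set: points whose central window recurs at a coprime pair of shifts. -/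
def Arec : Set (ℤ → Bool) :=
  ⋂ R : ℕ, ⋃ (g : ℕ) (h : ℕ) (_ : 0 < g ∧ g < h ∧ Nat.Coprime g h),
    ⋂ (j : ℤ) (_ : j ∈ Finset.Icc (-(R:ℤ)) (R:ℤ)),
      {x : ℤ → Bool | x (j + g) = x j ∧ x (j + h) = x j}

lemma coprime_gsq (g : ℕ) (hg : 0 < g) : Nat.Coprime g (g*g - 1) := by
  have h1 : Nat.gcd g (g*g-1) ∣ g := Nat.gcd_dvd_left _ _
  have h2 : Nat.gcd g (g*g-1) ∣ (g*g-1) := Nat.gcd_dvd_right _ _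
  have h3 : Nat.gcd g (g*g-1) ∣ g*g := h1.mul_right g
  have h4 : 1 ≤ g*g := Nat.one_le_iff_ne_zero.mpr (by positivity)
  have h5 : Nat.gcd g (g*g-1) ∣ (g*g - (g*g-1)) := Nat.dvd_sub h3 h2
  have h6 : g*g - (g*g-1) = 1 := by omega
  rw [h6] at h5
  exact Nat.dvd_one.mp h5

lemma arec_residual : Arec ∈ residual (ℤ → Bool) := by
  rw [Arec, countable_iInter_mem]
  intro R
  apply residual_of_dense_open
  · apply isOpen_iUnion; intro g
    apply isOpen_iUnion; intro h
    apply isOpen_iUnion; intro _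
    apply isOpen_biInter_finset
    intro j _
    exact ((isClopen_coord_eq (j + g) j).inter (isClopen_coord_eq (j + h) j))
  · rw [dense_iff_inter_open]
    intro U hU ⟨x₀, hx₀⟩
    obtain ⟨I, u, hu, hpi⟩ := (isOpen_pi_iff.mp hU) x₀ hx₀
    set M : ℕ := I.sup (fun i => i.natAbs) + R with hM
    set g : ℕ := 2*M+3 with hg
    set h : ℕ := g*g - 1 with hh
    have hg3 : 3 ≤ g := by omega
    have hgg : 9 ≤ g*g := by have := Nat.mul_le_mul hg3 hg3; omega
    have h3g : 3*g ≤ g*g := Nat.mul_le_mul_right g hg3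
    have hglth : g < h := by rw [hh]; omega
    have hco : Nat.Coprime g h := coprime_gsq g (by omega)
    have hgM : (g:ℤ) = 2*(M:ℤ)+3 := by rw [hg]; push_cast; ring
    have hhZ : (h:ℤ) = (g:ℤ)*(g:ℤ) - 1 := by
      rw [hh]; push_cast [Nat.cast_sub (by omega : 1 ≤ g*g)]; ring
    have hhg2M : (h:ℤ) - (g:ℤ) > 2*(M:ℤ) + 1 := by
      rw [hhZ, hgM]; nlinarith [sq_nonneg (M:ℤ)]
    set x' : ℤ → Bool := fun n =>
      if |n - (g:ℤ)| ≤ (M:ℤ) then x₀ (n - g)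
      else if |n - (h:ℤ)| ≤ (M:ℤ) then x₀ (n - h) else x₀ n with hx'
    have hval : ∀ n : ℤ, |n| ≤ (M:ℤ) → x' n = x₀ n := by
      intro n hn
      rw [abs_le] at hn
      rw [hx']
      simp only
      rw [if_neg (by rw [abs_le]; rw [hgM]; omega),
          if_neg (by rw [abs_le]; omega)]
    have hvalg : ∀ n : ℤ, |n| ≤ (M:ℤ) → x' (n + g) = x₀ n := by
      intro n hn
      rw [abs_le] at hn
      rw [hx']
      simp only
      rw [if_pos (by rw [abs_le]; omega)]
      congr 1
      ring
    have hvalh : ∀ n : ℤ, |n| ≤ (M:ℤ) → x' (n + h) = x₀ n := by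
      intro n hn
      rw [abs_le] at hn
      rw [hx']
      simp only
      rw [if_neg (by rw [abs_le]; omega), if_pos (by rw [abs_le]; omega)]
      congr 1
      ring
    refine ⟨x', ?_, ?_⟩
    · apply hpi
      intro i hi
      have hib : i.natAbs ≤ I.sup (fun i => i.natAbs) :=
        Finset.le_sup (f := fun i : ℤ => i.natAbs) hi
      have : |i| ≤ (M:ℤ) := by
        rw [hM]
        have : (i.natAbs : ℤ) = |i| := by exact_mod_cast (Int.abs_eq_natAbs i).symm
        push_cast
        omega
      rw [hval i this]
      exact (hu i hi).2
    · simp only [Set.mem_iUnion, Set.mem_iInter]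
      refine ⟨g, h, ⟨by omega, hglth, hco⟩, ?_⟩
      intro j hj
      rw [Finset.mem_Icc] at hj
      have hjM : |j| ≤ (M:ℤ) := by rw [abs_le]; rw [hM]; push_cast; omega
      constructor
      · rw [hvalg j hjM, hval j hjM]
      · rw [hvalh j hjM, hval j hjM]


section ExtractCore

variable {bb L k : ℕ} (P : Fin k → Fin L → Fin bb)
variable (f : {x : ℤ → Bool // x ∈ FreePart} → {y : ℤ → Fin bb // y ∈ SFT P})

/-- Window data: a radius and a pattern. -/
def Wd (bb : ℕ) := Σ N : ℕ, (Fin (2*N+1) → Fin bb)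

instance : Countable (Wd bb) := by unfold Wd; infer_instance

def VsetW (w : Wd bb) : Set (ℤ → Fin bb) :=
  {z | ∀ j : Fin (2*w.1+1), z ((j:ℤ) - w.1) = w.2 j}

lemma VsetW_open (w : Wd bb) : IsOpen (VsetW w) := by
  have : VsetW w = ⋂ j : Fin (2*w.1+1), {z : ℤ → Fin bb | z ((j:ℤ) - w.1) = w.2 j} := by
    ext z; simp [VsetW]
  rw [this]
  apply isOpen_iInter_of_finite
  intro j
  have hc : Continuous (fun z : ℤ → Fin bb => z ((j:ℤ) - (w.1:ℤ))) := continuous_apply _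
  exact IsOpen.preimage hc (isOpen_discrete {v : Fin bb | v = w.2 j})

noncomputable def SsetW (w : Wd bb) : Set (ℤ → Bool) :=
  {x | ∃ hx : x ∈ FreePart, ((f ⟨x, hx⟩ : ℤ → Fin bb)) ∈ VsetW w}

lemma freePart_measurable : MeasurableSet FreePart := by
  have : FreePart = ⋂ (s : ℤ), ⋂ (_ : s ≠ 0), {x : ℤ → Bool | shift s x ≠ x} := by
    ext x
    simp only [FreePart, Set.mem_setOf_eq, Set.mem_iInter]
  rw [this]
  apply MeasurableSet.iInter
  intro s
  apply MeasurableSet.iInter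
  intro _
  exact (isOpen_shift_ne s).measurableSet

lemma SsetW_measurable (hf : Measurable f) (w : Wd bb) : MeasurableSet (SsetW P f w) := by
  have hg : Measurable (fun p : {x : ℤ → Bool // x ∈ FreePart} => (f p : ℤ → Fin bb)) :=
    measurable_subtype_coe.comp hf
  have hpre : MeasurableSet ((fun p : {x : ℤ → Bool // x ∈ FreePart} =>
      (f p : ℤ → Fin bb)) ⁻¹' VsetW w) := hg (VsetW_open w).measurableSet
  have himg : SsetW P f w = Subtype.val '' ((fun p : {x : ℤ → Bool // x ∈ FreePart} =>
      (f p : ℤ → Fin bb)) ⁻¹' VsetW w) := by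
    ext x
    simp only [SsetW, Set.mem_setOf_eq, Set.mem_image, Set.mem_preimage]
    constructor
    · rintro ⟨hx, hv⟩
      exact ⟨⟨x, hx⟩, hv, rfl⟩
    · rintro ⟨⟨x', hx'⟩, hv, rfl⟩
      exact ⟨hx', hv⟩
  rw [himg]
  exact freePart_measurable.subtype_image hpre

theorem extraction (hf : Measurable f) (he : EquivariantOn (SFT P) f) :
    ∃ y : ℤ → Fin bb, y ∈ SFT P ∧ ∃ g h : ℕ, 0 < g ∧ g < h ∧ Nat.Coprime g h ∧
      (∀ t : ℤ, |t| ≤ (L:ℤ) → y (t + g) = y t) ∧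
      (∀ t : ℤ, |t| ≤ (L:ℤ) → y (t + h) = y t) := by
  classical
  -- open sets approximating the Borel sets SsetW
  have hU : ∀ w : Wd bb, ∃ u : Set (ℤ → Bool), IsOpen u ∧ (SsetW P f w) =ᵇ u :=
    fun w => (SsetW_measurable P f hf w).residualEq_isOpen
  choose U hUo hUeq using hU
  set E : Wd bb → Set (ℤ → Bool) := fun w => {x | x ∈ SsetW P f w ↔ x ∈ U w} with hE
  have hEres : ∀ w, E w ∈ residual (ℤ → Bool) := by
    intro w
    exact (Filter.eventuallyEq_set.mp (hUeq w))
  set Core : Set (ℤ → Bool) := ⋂ w : Wd bb, E w with hCore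
  have hCoreRes : Core ∈ residual (ℤ → Bool) := countable_iInter_mem.mpr hEres
  set CoreInv : Set (ℤ → Bool) := ⋂ s : ℤ, (shift s) ⁻¹' Core with hCoreInv
  have hCoreInvRes : CoreInv ∈ residual (ℤ → Bool) := by
    apply countable_iInter_mem.mpr
    intro s
    have := (homeoShift s).residual_map_eq
    rw [← this] at hCoreRes
    exact Filter.mem_map.mp hCoreRes
  have hBigRes : FreePart ∩ (Arec ∩ CoreInv) ∈ residual (ℤ → Bool) :=
    Filter.inter_mem freePart_residual (Filter.inter_mem arec_residual hCoreInvRes)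
  obtain ⟨x₀, hx⟩ := (dense_of_mem_residual hBigRes).nonempty
  obtain ⟨hxF, hxA, hxC⟩ := hx
  -- the image point
  set y0 : ℤ → Fin bb := (f ⟨x₀, hxF⟩ : ℤ → Fin bb) with hy0
  have hySFT : y0 ∈ SFT P := (f ⟨x₀, hxF⟩).2
  set w0 : Wd bb := ⟨L, fun j => y0 ((j:ℤ) - L)⟩ with hw0
  have hxCore : ∀ s : ℤ, shift s x₀ ∈ Core := by
    intro s
    have := Set.mem_iInter.mp hxC s
    exact this
  have hxE : ∀ s : ℤ, shift s x₀ ∈ E w0 := fun s => Set.mem_iInter.mp (hxCore s) w0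
  have hxS : x₀ ∈ SsetW P f w0 := ⟨hxF, fun j => rfl⟩
  have hxU : x₀ ∈ U w0 := by
    have h0 := hxE 0
    rw [shift_zero] at h0
    exact h0.mp hxS
  obtain ⟨I, u, hu, hpi⟩ := (isOpen_pi_iff.mp (hUo w0)) x₀ hxU
  set R : ℕ := I.sup (fun i => i.natAbs) with hR
  have hxA' := Set.mem_iInter.mp hxA R
  simp only [Set.mem_iUnion, Set.mem_iInter] at hxA'
  obtain ⟨g, h, ⟨hg, hgh, hco⟩, hret⟩ := hxA'
  -- both shifts land in U w0
  have hland : ∀ s : ℕ, (∀ j : ℤ, j ∈ Finset.Icc (-(R:ℤ)) (R:ℤ) → x₀ (j + s) = x₀ j) →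
      shift (s:ℤ) x₀ ∈ U w0 := by
    intro s hs
    apply hpi
    intro i hi
    have hib : i.natAbs ≤ R := hR ▸ Finset.le_sup (f := fun i : ℤ => i.natAbs) hi
    have : shift (s:ℤ) x₀ i = x₀ i := by
      have := hs i (Finset.mem_Icc.mpr (by omega))
      simpa [shift] using this
    rw [this]
    exact (hu i hi).2
  have hretg : ∀ j : ℤ, j ∈ Finset.Icc (-(R:ℤ)) (R:ℤ) → x₀ (j + g) = x₀ j :=
    fun j hj => (hret j hj).1
  have hreth : ∀ j : ℤ, j ∈ Finset.Icc (-(R:ℤ)) (R:ℤ) → x₀ (j + h) = x₀ j :=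
    fun j hj => (hret j hj).2
  -- conclude window periodicity of y0
  have hwin : ∀ s : ℕ, shift (s:ℤ) x₀ ∈ U w0 →
      (∀ t : ℤ, |t| ≤ (L:ℤ) → y0 (t + s) = y0 t) := by
    intro s hsU
    have hsE := hxE (s:ℤ)
    have hsS : shift (s:ℤ) x₀ ∈ SsetW P f w0 := hsE.mpr hsU
    obtain ⟨hsF, hsV⟩ := hsS
    have heq := he ⟨x₀, hxF⟩ (s:ℤ) hsF
    rw [heq] at hsV
    intro t ht
    have hb : (t + L).toNat < 2*L+1 := by rw [abs_le] at ht; omega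
    have := hsV ⟨(t + L).toNat, hb⟩
    simp only [shift] at this
    have hcast : ((⟨(t + L).toNat, hb⟩ : Fin (2*L+1)) : ℤ) = t + L := by
      simp
      rw [abs_le] at ht
      omega
    rw [hcast] at this
    rw [show t + (L:ℤ) - L = t by ring] at this
    refine this.trans ?_
    show y0 (((⟨(t + L).toNat, hb⟩ : Fin (2*L+1)) : ℤ) - L) = y0 t
    rw [hcast, show t + (L:ℤ) - L = t by ring]
  exact ⟨y0, hySFT, g, h, hg, hgh, hco,
    hwin g (hland g hretg), hwin h (hland h hreth)⟩

end ExtractCore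

end Extraction

end BCEM

/-- For a subshift of finite type `Y ⊆ b^ℤ`, there is a Borel
equivariant map `F(2^ℤ) → Y` iff there is a continuous equivariant map `F(2^ℤ) → Y`. -/
theorem borel_iff_continuous_equivariant_map
    (b L k : ℕ) (hb : 1 ≤ b) (hL : 1 ≤ L) (P : Fin k → Fin L → Fin b) :
    (∃ f : {x : ℤ → Bool // x ∈ FreePart} → {y : ℤ → Fin b // y ∈ SFT P},
       Measurable f ∧ EquivariantOn (SFT P) f) ↔
    (∃ f : {x : ℤ → Bool // x ∈ FreePart} → {y : ℤ → Fin b // y ∈ SFT P},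
       Continuous f ∧ EquivariantOn (SFT P) f) := by
  constructor
  · rintro ⟨f, hf, he⟩
    obtain ⟨y, hySFT, g, h, hg, hgh, hco, hperg, hperh⟩ := BCEM.extraction P f hf he
    set q₁ : ℕ := g with hq₁def
    set q₂ : ℕ := h - g with hq₂def
    have hq₁ : 0 < q₁ := hg
    have hq₂ : 0 < q₂ := by omega
    have hco' : Nat.Coprime q₁ q₂ :=
      (Nat.coprime_sub_self_right (le_of_lt hgh)).mpr hco
    have hsum : (q₁:ℤ) + (q₂:ℤ) = (h:ℤ) := by
      rw [hq₁def, hq₂def]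
      push_cast [Nat.cast_sub (show g ≤ h from le_of_lt hgh)]
      ring
    have hper1 : ∀ t : ℤ, |t| ≤ (L:ℤ) → y (t + q₁) = y t := hperg
    have hper2 : ∀ t : ℤ, |t| ≤ (L:ℤ) → y (t + ((q₁:ℤ) + (q₂:ℤ))) = y t := by
      intro t ht
      rw [hsum]
      exact hperh t ht
    refine ⟨fun x => ⟨BCEM.Zf y q₁ q₂ x.1,
      BCEM.Zf_SFT y q₁ q₂ hq₁ hq₂ hco' x.2 hper1 hper2 P hySFT⟩, ?_, ?_⟩
    · -- continuity
      apply Continuous.subtype_mk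
      apply continuous_pi
      intro n
      rw [continuous_iff_continuousAt]
      intro x₀
      obtain ⟨r, hr⟩ := BCEM.Zf_local y q₁ q₂ x₀.2 n
      set V : Set {x : ℤ → Bool // x ∈ FreePart} :=
        {x' | ∀ j ∈ Finset.Icc (-(r:ℤ)) (r:ℤ), x'.1 j = x₀.1 j} with hV
      have hVopen : IsOpen V := by
        have : V = ⋂ j ∈ Finset.Icc (-(r:ℤ)) (r:ℤ),
            (fun x' : {x : ℤ → Bool // x ∈ FreePart} => x'.1 j) ⁻¹' {x₀.1 j} := by
          ext x'
          simp [hV]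
        rw [this]
        apply isOpen_biInter_finset
        intro j _
        exact IsOpen.preimage ((continuous_apply j).comp continuous_subtype_val)
          (isOpen_discrete {x₀.1 j})
      have hx₀V : x₀ ∈ V := by
        intro j _
        rfl
      apply ContinuousAt.congr (continuousAt_const
        (y := BCEM.Zf y q₁ q₂ x₀.1 n))
      apply Filter.eventuallyEq_of_mem (hVopen.mem_nhds hx₀V)
      intro x' hx'
      exact (hr x'.1 (fun j hj => (hx' j (Finset.mem_Icc.mpr (abs_le.mp hj))).symm)).symm
    · -- equivariance
      intro x s hs
      funext n
      have := BCEM.Zf_shift y q₁ q₂ x.2 s n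
      exact this
  · rintro ⟨f, hf, he⟩
    exact ⟨f, hf.measurable, he⟩
end

section
/- Let 𝔟 ≥ 1 and let Y ⊆ 𝔟^ℤ be the subshift of finite type described by forbidden patterns p_1,…,p_k, all of length L. Then there exists a Borel equivariant map from F(2^ℤ) to Y if and only if there exist integers n, p, q with L ≤ n < p, q and gcd(p,q) = 1, and elements y_1, y_2 ∈ Y such that y_1(m+p) = y_1(m) for all m ∈ ℤ, y_2(m+q) = y_2(m) for all m ∈ ℤ, and y_1(i) = y_2(i) for all 0 ≤ i < n. -/
open MeasureTheory

namespace BEQ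

lemma shift_shift {α : Type*} (a c : ℤ) (x : ℤ → α) : shift a (shift c x) = shift (a + c) x := by
  funext n; simp [shift, add_assoc]

lemma shift_zero {α : Type*} (x : ℤ → α) : shift 0 x = x := by funext n; simp [shift]

lemma measurable_shift {α : Type*} [MeasurableSpace α] (s : ℤ) :
    Measurable (shift s : (ℤ → α) → (ℤ → α)) :=
  measurable_pi_lambda _ (fun n => measurable_pi_apply (n + s))

lemma freePart_shift {x : ℤ → Bool} (hx : x ∈ FreePart) (s : ℤ) : shift s x ∈ FreePart := by
  intro t ht h
  rw [shift_shift] at h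
  have h2 := congrArg (shift (-s)) h
  rw [shift_shift, shift_shift] at h2
  have : -s + (t + s) = t := by ring
  rw [this] at h2
  have : -s + s = 0 := by ring
  rw [this, shift_zero] at h2
  exact hx t ht h2

lemma occurs_shift {b L : ℕ} {p : Fin L → Fin b} {y : ℤ → Fin b} (s : ℤ)
    (h : Occurs p (shift s y)) : Occurs p y := by
  obtain ⟨m, hm⟩ := h
  exact ⟨m + s, fun i => by have := hm i; simpa [shift, add_right_comm m (i:ℤ) s] using this⟩

lemma sft_shift {b L k : ℕ} {P : Fin k → Fin L → Fin b} {y : ℤ → Fin b}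
    (hy : y ∈ SFT P) (s : ℤ) : shift s y ∈ SFT P :=
  fun j h => hy j (occurs_shift s h)

section periodic

variable {b : ℕ} {c : ℤ → Fin b}

lemma per_sub {t : ℤ} (h : ∀ m, c (m + t) = c m) (m : ℤ) : c (m - t) = c m := by
  have := h (m - t)
  rw [sub_add_cancel] at this
  exact this.symm

lemma per_zmul {t : ℤ} (h : ∀ m, c (m + t) = c m) : ∀ (K : ℤ) (m : ℤ), c (m + K * t) = c m := by
  intro K
  induction K using Int.induction_on with
  | zero => simp
  | succ i ih => intro m
                 have : m + (i + 1) * t = (m + i * t) + t := by ring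
                 rw [this, h, ih]
  | pred i ih => intro m
                 have : m + (-i - 1) * t = (m + (-i) * t) - t := by ring
                 rw [this, per_sub h, ih]

lemma per_emod {t : ℤ} (ht : 0 < t) (h : ∀ m, c (m + t) = c m) (s : ℤ) : c s = c (s % t) := by
  have h1 : s % t + (s / t) * t = s := by
    have := Int.mul_ediv_add_emod s t
    linarith [this]
  calc c s = c (s % t + (s / t) * t) := by rw [h1]
    _ = c (s % t) := per_zmul h _ _

end periodic

section closing

variable {b L k : ℕ} {P : Fin k → Fin L → Fin b}

/-- Closing lemma: if `y ∈ Y` has two occurrences of the same length-`n` word (`n ≥ L`)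
at positions `0` and `t > 0`, then repeating `y|[0,t)` gives a `t`-periodic point of `Y`
agreeing with `y` on `[0,n)`. -/
lemma closing {y : ℤ → Fin b} (hy : y ∈ SFT P) {t : ℤ} (ht : 0 < t) {n : ℕ} (hLn : L ≤ n)
    (hagree : ∀ i : ℤ, 0 ≤ i → i < n → y (t + i) = y i) :
    ∃ z : ℤ → Fin b, z ∈ SFT P ∧ (∀ m, z (m + t) = z m) ∧
      (∀ i : ℤ, 0 ≤ i → i < n → z i = y i) := by
  have ht' : t ≠ 0 := ht.ne'
  set z : ℤ → Fin b := fun m => y (m % t) with hz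
  -- main auxiliary: y s = y (s % t) for 0 ≤ s < t + n
  have W : ∀ s : ℤ, 0 ≤ s → s < t + n → y s = y (s % t) := by
    intro s hs0 hsn
    obtain ⟨j, rfl⟩ := Int.eq_ofNat_of_zero_le hs0
    induction j using Nat.strong_induction_on with
    | _ j ih =>
      by_cases hj : (j : ℤ) < t
      · rw [Int.emod_eq_of_lt (by positivity) hj]
      · push_neg at hj
        set s' : ℤ := (j : ℤ) - t with hs'
        have hs'0 : 0 ≤ s' := by omega
        have hs'n : s' < n := by omega
        obtain ⟨j', hj'⟩ := Int.eq_ofNat_of_zero_le hs'0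
        have hjj' : (j' : ℤ) < j := by omega
        have h1 : y (j : ℤ) = y s' := by
          have : (j : ℤ) = t + s' := by omega
          rw [this]; exact hagree s' hs'0 (by exact_mod_cast hs'n)
        have h2 : y s' = y (s' % t) := by
          rw [hj'] at hs'n ⊢
          exact ih j' (by exact_mod_cast hjj') (Int.ofNat_nonneg j') (by omega)
        have h3 : (j : ℤ) % t = s' % t := by
          have : (j : ℤ) = s' + t * 1 := by omega
          rw [this, Int.add_mul_emod_self_left]
        rw [h1, h2, h3]
  have hper : ∀ m, z (m + t) = z m := by
    intro m
    simp only [hz]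
    congr 1
    have : m + t = m + t * 1 := by ring
    rw [this, Int.add_mul_emod_self_left]
  refine ⟨z, ?_, hper, ?_⟩
  · -- z ∈ SFT P
    intro j ⟨m, hm⟩
    apply hy j
    refine ⟨m % t, fun i => ?_⟩
    have hr0 : 0 ≤ m % t := Int.emod_nonneg m ht'
    have hrt : m % t < t := Int.emod_lt_of_pos m ht
    have key : z (m + (i : ℤ)) = y (m % t + (i : ℤ)) := by
      simp only [hz]
      have h1 : (m + (i : ℤ)) % t = (m % t + (i : ℤ)) % t := by
        conv_lhs => rw [Int.add_emod]
        conv_rhs => rw [Int.add_emod, Int.emod_emod_of_dvd _ dvd_rfl]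
      rw [h1]
      have hi : (i : ℤ) < L := by exact_mod_cast i.2
      have : y (m % t + (i : ℤ)) = y ((m % t + (i : ℤ)) % t) := by
        apply W _ (by positivity) (by omega)
      rw [← this]
    rw [← key]; exact hm i
  · intro i hi0 hin
    simp only [hz]
    exact (W i hi0 (by omega)).symm

end closing

end BEQ
section markers

open Classical

variable (N : ℕ)

def cylV (c : List (ℤ × Bool)) : Set (ℤ → Bool) := {x | ∀ pr ∈ c, x pr.1 = pr.2}

def cylV' (c : List (ℤ × Bool)) : Set (ℤ → Bool) :=
  cylV c ∩ {x | ∀ l : ℤ, l ≠ 0 → |l| ≤ N → shift l x ∉ cylV c}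

noncomputable def MM : ℕ → Set (ℤ → Bool)
  | 0 => ∅
  | (i+1) => MM i ∪ (((Encodable.decode i : Option (List (ℤ × Bool))).elim ∅ (cylV' N)) \
      {x | ∃ l : ℤ, |l| ≤ N ∧ shift l x ∈ MM i})

def Mk : Set (ℤ → Bool) := ⋃ i, MM N i

lemma measurableSet_cylV (c : List (ℤ × Bool)) : MeasurableSet (cylV c) := by
  have : cylV c = ⋂ pr ∈ c, (fun x : ℤ → Bool => x pr.1) ⁻¹' {pr.2} := by
    ext x; simp [cylV]
  rw [this]
  exact MeasurableSet.biInter (c.finite_toSet.countable) fun pr _ =>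
    (measurable_pi_apply pr.1) (measurableSet_singleton pr.2)

lemma measurableSet_cylV' (c : List (ℤ × Bool)) : MeasurableSet (cylV' N c) := by
  apply (measurableSet_cylV c).inter
  have : {x : ℤ → Bool | ∀ l : ℤ, l ≠ 0 → |l| ≤ N → shift l x ∉ cylV c} =
      ⋂ (l : ℤ) (_ : l ≠ 0) (_ : |l| ≤ (N:ℤ)), (shift l) ⁻¹' (cylV c)ᶜ := by
    ext x; simp [Set.mem_iInter]
  rw [this]
  exact MeasurableSet.iInter fun l => MeasurableSet.iInter fun _ => MeasurableSet.iInter fun _ =>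
    (BEQ.measurable_shift l) (measurableSet_cylV c).compl

lemma measurableSet_MM : ∀ i, MeasurableSet (MM N i) := by
  intro i
  induction i with
  | zero => simp [MM]
  | succ i ih =>
    apply ih.union
    apply MeasurableSet.diff
    · rcases h : (Encodable.decode i : Option (List (ℤ × Bool))) with _ | c
      · simp [Option.elim]
      · simpa [Option.elim] using measurableSet_cylV' N c
    · have : {x : ℤ → Bool | ∃ l : ℤ, |l| ≤ N ∧ shift l x ∈ MM N i} =
          ⋃ (l : ℤ) (_ : |l| ≤ (N:ℤ)), (shift l) ⁻¹' (MM N i) := by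
        ext x; simp
      rw [this]
      exact MeasurableSet.iUnion fun l => MeasurableSet.iUnion fun _ =>
        (BEQ.measurable_shift l) ih

lemma measurableSet_Mk : MeasurableSet (Mk N) :=
  MeasurableSet.iUnion (measurableSet_MM N)

lemma MM_mono {i j : ℕ} (h : i ≤ j) : MM N i ⊆ MM N j := by
  induction j with
  | zero => simp_all
  | succ j ih =>
    rcases Nat.lt_or_ge i (j+1) with h' | h'
    · exact (ih (by omega)).trans (by rw [MM]; exact Set.subset_union_left)
    · have : i = j + 1 := by omega
      subst this; rfl

lemma MM_discrete : ∀ i (x : ℤ → Bool) (l : ℤ), x ∈ MM N i → shift l x ∈ MM N i →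
    l ≠ 0 → |l| ≤ N → False := by
  intro i
  induction i with
  | zero => intro x l hx; simp [MM] at hx
  | succ i ih =>
    intro x l hx hlx hl0 hlN
    rw [MM] at hx hlx
    rcases hx with hx | hx <;> rcases hlx with hlx | hlx
    · exact ih x l hx hlx hl0 hlN
    · exact hlx.2 ⟨-l, by simpa using hlN, by
        rw [BEQ.shift_shift]; simpa [BEQ.shift_zero] using hx⟩
    · exact hx.2 ⟨l, hlN, hlx⟩
    · rcases h : (Encodable.decode i : Option (List (ℤ × Bool))) with _ | c
      · rw [h] at hx; simp [Option.elim] at hx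
      · rw [h] at hx hlx
        simp only [Option.elim] at hx hlx
        exact hx.1.2 l hl0 hlN hlx.1.1

lemma Mk_discrete {x : ℤ → Bool} {l : ℤ} (hx : x ∈ Mk N) (hlx : shift l x ∈ Mk N)
    (hl0 : l ≠ 0) (hlN : |l| ≤ N) : False := by
  obtain ⟨_, ⟨i, rfl⟩, hx⟩ := hx
  obtain ⟨_, ⟨j, rfl⟩, hlx⟩ := hlx
  exact MM_discrete N (max i j) x l (MM_mono N (le_max_left i j) hx)
    (MM_mono N (le_max_right i j) hlx) hl0 hlN

lemma exists_cylV' {x : ℤ → Bool} (hx : x ∈ FreePart) : ∃ c, x ∈ cylV' N c := by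
  classical
  have hex : ∀ l : ℤ, l ≠ 0 → ∃ m : ℤ, x (m + l) ≠ x m := by
    intro l hl
    have := hx l hl
    rw [Function.ne_iff] at this
    obtain ⟨m, hm⟩ := this
    exact ⟨m, hm⟩
  set T := (Finset.Icc (-(N:ℤ)) N).erase 0 with hT
  set mf : ℤ → ℤ := fun l => if h : ∃ m : ℤ, x (m + l) ≠ x m then h.choose else 0 with hmf
  set c : List (ℤ × Bool) := T.toList.map (fun l => (mf l, x (mf l))) with hc
  refine ⟨c, ?_, ?_⟩
  · intro pr hpr
    simp only [hc, List.mem_map] at hpr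
    obtain ⟨l, _, rfl⟩ := hpr
    rfl
  · intro l hl0 hlN hmem
    have hlT : l ∈ T := by
      simp [hT, Finset.mem_erase, Finset.mem_Icc, hl0, abs_le.mp hlN]
    have hpr : (mf l, x (mf l)) ∈ c := by
      simp only [hc, List.mem_map]
      exact ⟨l, Finset.mem_toList.mpr hlT, rfl⟩
    have := hmem _ hpr
    have h' := hex l hl0
    have hmfl : mf l = h'.choose := by simp [hmf, dif_pos h']
    rw [hmfl] at this
    exact h'.choose_spec this

lemma Mk_syndetic {x : ℤ → Bool} (hx : x ∈ FreePart) : ∃ l : ℤ, |l| ≤ N ∧ shift l x ∈ Mk N := by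
  obtain ⟨c, hc⟩ := exists_cylV' N hx
  set i := Encodable.encode c with hi
  by_cases hb : ∃ l : ℤ, |l| ≤ N ∧ shift l x ∈ MM N i
  · obtain ⟨l, h1, h2⟩ := hb
    exact ⟨l, h1, Set.mem_iUnion.mpr ⟨i, h2⟩⟩
  · refine ⟨0, by simp, ?_⟩
    rw [BEQ.shift_zero]
    apply Set.mem_iUnion.mpr ⟨i + 1, ?_⟩
    rw [MM]
    right
    constructor
    · rw [hi, Encodable.encodek]
      exact hc
    · exact hb

end markers
section gaps

open Classical in
lemma prevD_ex (N : ℕ) (x : ℤ → Bool) (m : ℤ) :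
    ∃ d : ℕ, shift (m - d) x ∈ Mk N ∨ x ∉ FreePart := by
  by_cases hx : x ∈ FreePart
  · obtain ⟨l, hl, hm⟩ := Mk_syndetic N (BEQ.freePart_shift hx (m - N))
    rw [BEQ.shift_shift] at hm
    refine ⟨(N - l).toNat, Or.inl ?_⟩
    have h1 : (m : ℤ) - ((N : ℤ) - l).toNat = l + (m - N) := by
      rw [Int.toNat_of_nonneg (by have := abs_le.mp hl; omega)]; ring
    rw [h1]; exact hm
  · exact ⟨0, Or.inr hx⟩

open Classical in
lemma nxtD_ex (N : ℕ) (x : ℤ → Bool) (m : ℤ) :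
    ∃ d : ℕ, shift (m + 1 + d) x ∈ Mk N ∨ x ∉ FreePart := by
  by_cases hx : x ∈ FreePart
  · obtain ⟨l, hl, hm⟩ := Mk_syndetic N (BEQ.freePart_shift hx (m + 1 + N))
    rw [BEQ.shift_shift] at hm
    refine ⟨(l + N).toNat, Or.inl ?_⟩
    have h1 : m + 1 + ((l + (N:ℤ)).toNat : ℤ) = l + (m + 1 + N) := by
      rw [Int.toNat_of_nonneg (by have := abs_le.mp hl; omega)]; ring
    rw [h1]; exact hm
  · exact ⟨0, Or.inr hx⟩

open Classical in
noncomputable def prevZ (N : ℕ) (x : ℤ → Bool) (m : ℤ) : ℤ := m - Nat.find (prevD_ex N x m)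

open Classical in
noncomputable def nxtZ (N : ℕ) (x : ℤ → Bool) (m : ℤ) : ℤ := m + 1 + Nat.find (nxtD_ex N x m)

variable {N : ℕ} {x : ℤ → Bool}

open Classical

lemma prevZ_le (m : ℤ) : prevZ N x m ≤ m := by
  simp only [prevZ]; omega

lemma nxtZ_gt (m : ℤ) : m < nxtZ N x m := by
  simp only [nxtZ]; omega

lemma prevZ_mem (hx : x ∈ FreePart) (m : ℤ) : shift (prevZ N x m) x ∈ Mk N := by
  have := Nat.find_spec (prevD_ex N x m)
  rcases this with h | h
  · exact h
  · exact absurd hx h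

lemma nxtZ_mem (hx : x ∈ FreePart) (m : ℤ) : shift (nxtZ N x m) x ∈ Mk N := by
  have := Nat.find_spec (nxtD_ex N x m)
  rcases this with h | h
  · exact h
  · exact absurd hx h

lemma prevZ_max (hx : x ∈ FreePart) {m a : ℤ} (ha : a ≤ m) (hm : shift a x ∈ Mk N) :
    a ≤ prevZ N x m := by
  by_contra hlt
  push_neg at hlt
  have hd : ((m - a).toNat : ℤ) = m - a := Int.toNat_of_nonneg (by omega)
  have hdlt : (m - a).toNat < Nat.find (prevD_ex N x m) := by
    simp only [prevZ] at hlt; omega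
  exact Nat.find_min (prevD_ex N x m) hdlt (Or.inl (by rw [show m - ((m - a).toNat : ℤ) = a by omega]; exact hm))

lemma nxtZ_min (hx : x ∈ FreePart) {m a : ℤ} (ha : m < a) (hm : shift a x ∈ Mk N) :
    nxtZ N x m ≤ a := by
  by_contra hlt
  push_neg at hlt
  have hdlt : (a - (m + 1)).toNat < Nat.find (nxtD_ex N x m) := by
    simp only [nxtZ] at hlt; omega
  exact Nat.find_min (nxtD_ex N x m) hdlt (Or.inl (by rw [show m + 1 + ((a - (m+1)).toNat : ℤ) = a by omega]; exact hm))

lemma no_marker_between (hx : x ∈ FreePart) {m j : ℤ} (h1 : prevZ N x m < j)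
    (h2 : j < nxtZ N x m) : shift j x ∉ Mk N := by
  intro hm
  rcases le_or_gt j m with h | h
  · exact absurd (prevZ_max hx h hm) (by omega)
  · exact absurd (nxtZ_min hx h hm) (by omega)

lemma gap_ge (hx : x ∈ FreePart) (m : ℤ) : (N : ℤ) + 1 ≤ nxtZ N x m - prevZ N x m := by
  by_contra hlt
  push_neg at hlt
  have hne : nxtZ N x m - prevZ N x m ≠ 0 := by
    have := prevZ_le (N := N) (x := x) m; have := nxtZ_gt (N := N) (x := x) m; omega
  apply Mk_discrete N (prevZ_mem hx m) (l := nxtZ N x m - prevZ N x m) ?_ hne ?_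
  · rw [BEQ.shift_shift, show nxtZ N x m - prevZ N x m + prevZ N x m = nxtZ N x m by ring]
    exact nxtZ_mem hx m
  · have := prevZ_le (N := N) (x := x) m; have := nxtZ_gt (N := N) (x := x) m
    rw [abs_le]; omega

lemma prevZ_congr (hx : x ∈ FreePart) {m m' : ℤ} (h1 : prevZ N x m ≤ m') (h2 : m' < nxtZ N x m) :
    prevZ N x m' = prevZ N x m ∧ nxtZ N x m' = nxtZ N x m := by
  constructor
  · apply le_antisymm
    · by_contra hlt
      push_neg at hlt
      exact no_marker_between hx hlt (lt_of_le_of_lt (prevZ_le m') h2) (prevZ_mem hx m')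
    · exact prevZ_max hx h1 (prevZ_mem hx m)
  · apply le_antisymm
    · exact nxtZ_min hx h2 (nxtZ_mem hx m)
    · by_contra hlt
      push_neg at hlt
      apply no_marker_between hx (m := m) ?_ hlt (nxtZ_mem hx m')
      calc prevZ N x m ≤ m' := h1
        _ < nxtZ N x m' := nxtZ_gt m'

lemma prevZ_equiv (hx : x ∈ FreePart) (s m : ℤ) : prevZ N (shift s x) m = prevZ N x (m + s) - s := by
  have hiff : ∀ d : ℕ, (shift (m - d) (shift s x) ∈ Mk N ∨ shift s x ∉ FreePart) ↔
      (shift (m + s - d) x ∈ Mk N ∨ x ∉ FreePart) := by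
    intro d
    rw [BEQ.shift_shift, show m - d + s = m + s - d by ring]
    constructor
    · rintro (h | h); · exact Or.inl h
      · exact absurd (BEQ.freePart_shift hx s) h
    · rintro (h | h); · exact Or.inl h
      · exact absurd hx h
  have : Nat.find (prevD_ex N (shift s x) m) = Nat.find (prevD_ex N x (m + s)) :=
    le_antisymm (Nat.find_mono fun d hd => (hiff d).mpr hd) (Nat.find_mono fun d hd => (hiff d).mp hd)
  simp only [prevZ, this]; ring

lemma nxtZ_equiv (hx : x ∈ FreePart) (s m : ℤ) : nxtZ N (shift s x) m = nxtZ N x (m + s) - s := by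
  have hiff : ∀ d : ℕ, (shift (m + 1 + d) (shift s x) ∈ Mk N ∨ shift s x ∉ FreePart) ↔
      (shift (m + s + 1 + d) x ∈ Mk N ∨ x ∉ FreePart) := by
    intro d
    rw [BEQ.shift_shift, show m + 1 + d + s = m + s + 1 + d by ring]
    constructor
    · rintro (h | h); · exact Or.inl h
      · exact absurd (BEQ.freePart_shift hx s) h
    · rintro (h | h); · exact Or.inl h
      · exact absurd hx h
  have : Nat.find (nxtD_ex N (shift s x) m) = Nat.find (nxtD_ex N x (m + s)) :=
    le_antisymm (Nat.find_mono fun d hd => (hiff d).mpr hd) (Nat.find_mono fun d hd => (hiff d).mp hd)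
  simp only [nxtZ, this]; ring

end gaps
section filling

open Classical

lemma emod_eq_of_dvd_sub {t u v : ℤ} (h : t ∣ (u - v)) : u % t = v % t :=
  Int.emod_eq_emod_iff_emod_sub_eq_zero.mpr (Int.emod_eq_zero_of_dvd h)

open Classical in
noncomputable def repPQ (p q : ℕ) (g : ℤ) : ℕ × ℕ :=
  if h : ∃ kk : ℕ × ℕ, g = kk.1 * p + kk.2 * q then h.choose else (0, 0)

lemma repPQ_spec {p q : ℕ} (hcop : Nat.Coprime p q) (hp : 0 < p) (hq : 0 < q) {g : ℤ}
    (hg : (p : ℤ) * q ≤ g) : g = ((repPQ p q g).1 : ℤ) * p + ((repPQ p q g).2 : ℤ) * q := by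
  have hex : ∃ kk : ℕ × ℕ, g = (kk.1 : ℤ) * p + (kk.2 : ℤ) * q := by
    set A := Nat.gcdA p q with hA
    set B := Nat.gcdB p q with hB
    have hbez : (1 : ℤ) = p * A + q * B := by
      have h := Nat.gcd_eq_gcd_ab p q
      rw [Nat.Coprime] at hcop
      rw [hcop] at h
      exact_mod_cast h
    have hq' : (0:ℤ) < q := by exact_mod_cast hq
    have hp' : (0:ℤ) < p := by exact_mod_cast hp
    set K := (g * A) % q with hK
    have hK0 : 0 ≤ K := Int.emod_nonneg _ hq'.ne'
    have hKq : K < q := Int.emod_lt_of_pos _ hq'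
    have hdvd : (q:ℤ) ∣ (g * A - K) := ⟨(g * A) / q, by have := Int.mul_ediv_add_emod (g * A) q; omega⟩
    obtain ⟨c0, hc0⟩ := hdvd
    have key : g - K * p = q * (p * c0 + g * B) := by
      linear_combination g * hbez + (p : ℤ) * hc0
    have hpos : 0 < p * c0 + g * B := by
      have h3 : 0 < g - K * p := by nlinarith
      nlinarith
    refine ⟨(K.toNat, (p * c0 + g * B).toNat), ?_⟩
    simp only [Int.toNat_of_nonneg hK0, Int.toNat_of_nonneg hpos.le]
    linarith [key]
  rw [repPQ, dif_pos hex]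
  exact hex.choose_spec

noncomputable def Wd {b : ℕ} (p q : ℕ) (y₁ y₂ : ℤ → Fin b) (g t : ℤ) : Fin b :=
  if t < ((repPQ p q g).1 : ℤ) * p then y₁ t else y₂ (t - ((repPQ p q g).1 : ℤ) * p)

noncomputable def fz {b : ℕ} (N p q : ℕ) (y₁ y₂ : ℤ → Fin b) (x : ℤ → Bool) (m : ℤ) : Fin b :=
  Wd p q y₁ y₂ (nxtZ N x m - prevZ N x m) (m - prevZ N x m)

lemma fz_eval {b N p q : ℕ} {y₁ y₂ : ℤ → Fin b} {x : ℤ → Bool} (hx : x ∈ FreePart) (m : ℤ)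
    {t : ℤ} (h0 : 0 ≤ t) (ht : t < nxtZ N x m - prevZ N x m) :
    fz N p q y₁ y₂ x (prevZ N x m + t) = Wd p q y₁ y₂ (nxtZ N x m - prevZ N x m) t := by
  have h := prevZ_congr (N := N) (x := x) hx (m := m) (m' := prevZ N x m + t)
    (le_add_of_nonneg_right h0) (by omega)
  simp only [fz, h.1, h.2]
  rw [show prevZ N x m + t - prevZ N x m = t by ring]

section window

variable {b L k : ℕ} {P : Fin k → Fin L → Fin b} {p q n : ℕ} {y₁ y₂ : ℤ → Fin b}

lemma Wd_prefix (hn1 : 1 ≤ n) (hnp : n < p) (hnq : n < q)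
    (hagr : ∀ i : ℤ, 0 ≤ i → i < n → y₁ i = y₂ i)
    {g : ℤ} {j : ℤ} (h0 : 0 ≤ j) (hj : j < n) :
    Wd p q y₁ y₂ g j = y₁ j := by
  unfold Wd
  by_cases h : j < ((repPQ p q g).1 : ℤ) * p
  · rw [if_pos h]
  · rw [if_neg h]
    push_neg at h
    have hp' : (0:ℤ) < p := by exact_mod_cast (by omega : 0 < p)
    have hn' : (n:ℤ) < p := by exact_mod_cast hnp
    have hk1 : ((repPQ p q g).1 : ℤ) = 0 := by
      by_contra h1
      have h2 : (1:ℤ) ≤ ((repPQ p q g).1 : ℤ) := by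
        have : 0 < (repPQ p q g).1 := Nat.pos_of_ne_zero (by exact_mod_cast h1)
        exact_mod_cast this
      nlinarith
    rw [hk1]
    simp only [zero_mul, sub_zero]
    exact (hagr j h0 hj).symm

lemma fz_at_marker (hn1 : 1 ≤ n) (hnp : n < p) (hnq : n < q) (hcop : Nat.Coprime p q)
    (hagr : ∀ i : ℤ, 0 ≤ i → i < n → y₁ i = y₂ i)
    {x : ℤ → Bool} (hx : x ∈ FreePart) {e : ℤ} (he : shift e x ∈ Mk (p*q))
    {j : ℤ} (h0 : 0 ≤ j) (hj : j < n) :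
    fz (p*q) p q y₁ y₂ x (e + j) = y₁ j := by
  have hq : 0 < q := by omega
  have hnN : (n : ℤ) < ((p*q : ℕ) : ℤ) := by
    have : p ≤ p * q := Nat.le_mul_of_pos_right p hq
    exact_mod_cast lt_of_lt_of_le hnp this
  have hpe : prevZ (p*q) x e = e := le_antisymm (prevZ_le e) (prevZ_max hx le_rfl he)
  have hgap := gap_ge (N := p*q) hx e
  have heval := fz_eval (N := p*q) (p := p) (q := q) (y₁ := y₁) (y₂ := y₂) hx e
      (t := j) h0 (by omega)
  rw [hpe] at heval
  rw [heval]
  exact Wd_prefix hn1 hnp hnq hagr h0 hj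

lemma window_lemma (hn1 : 1 ≤ n) (hnp : n < p) (hnq : n < q) (hcop : Nat.Coprime p q)
    (hper1 : ∀ m, y₁ (m + (p:ℤ)) = y₁ m) (hper2 : ∀ m, y₂ (m + (q:ℤ)) = y₂ m)
    (hagr : ∀ i : ℤ, 0 ≤ i → i < n → y₁ i = y₂ i)
    {x : ℤ → Bool} (hx : x ∈ FreePart) (m : ℤ) :
    ∃ z : ℤ → Fin b, (z = y₁ ∨ z = y₂) ∧ ∃ c : ℤ,
      ∀ i : ℤ, 0 ≤ i → i < n → fz (p*q) p q y₁ y₂ x (m + i) = z (c + i) := by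
  have hp : 0 < p := by omega
  have hq : 0 < q := by omega
  have hp' : (0:ℤ) < p := by exact_mod_cast hp
  have hq' : (0:ℤ) < q := by exact_mod_cast hq
  have hnp' : (n:ℤ) < p := by exact_mod_cast hnp
  have hnq' : (n:ℤ) < q := by exact_mod_cast hnq
  set N := p * q with hN
  set a := prevZ N x m with ha
  set e := nxtZ N x m with he
  set g := nxtZ N x m - prevZ N x m with hgg
  set k₁ := ((repPQ p q g).1 : ℤ) with hk₁
  set k₂ := ((repPQ p q g).2 : ℤ) with hk₂
  have hgap := gap_ge (N := N) hx m
  have hNpq : ((N:ℕ) : ℤ) = (p:ℤ) * q := by rw [hN]; push_cast; ring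
  have hgpq : (p:ℤ) * q ≤ g := by rw [← hNpq]; omega
  have hrep : g = k₁ * p + k₂ * q := repPQ_spec hcop hp hq hgpq
  have hk₁0 : 0 ≤ k₁ := by positivity
  have hk₂0 : 0 ≤ k₂ := by positivity
  have hk₂q : 0 ≤ k₂ * q := mul_nonneg hk₂0 hq'.le
  have hk₁p : 0 ≤ k₁ * p := mul_nonneg hk₁0 hp'.le
  set r := m - a with hr
  have hr0 : 0 ≤ r := by have := prevZ_le (N := N) (x := x) m; omega
  have hrg : r < g := by have := nxtZ_gt (N := N) (x := x) m; omega
  have hdvd_r : (p:ℤ) ∣ (r - r % p) := ⟨r / p, by have := Int.mul_ediv_add_emod r p; linarith⟩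
  by_cases hcase : r < k₁ * p
  · refine ⟨y₁, Or.inl rfl, r % p, ?_⟩
    intro i hi0 hin
    have hmi : m + i = a + (r + i) := by omega
    by_cases hsub : r + i < k₁ * p
    · have hlt : r + i < g := by linarith
      rw [hmi, fz_eval hx m (by omega) (by rw [← hgg]; linarith)]
      rw [← hgg]
      unfold Wd
      rw [if_pos hsub]
      rw [BEQ.per_emod hp' hper1 (r + i), BEQ.per_emod hp' hper1 (r % p + i)]
      congr 1
      apply emod_eq_of_dvd_sub
      have heq : r + i - (r % p + i) = r - r % p := by ring
      rw [heq]; exact hdvd_r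
    · push_neg at hsub
      set j := r + i - k₁ * p with hj
      have hj0 : 0 ≤ j := by omega
      have hjn : j < n := by omega
      have hrhs : y₁ (r % p + i) = y₁ j := by
        rw [BEQ.per_emod hp' hper1 (r % p + i), BEQ.per_emod hp' hper1 j]
        congr 1
        apply emod_eq_of_dvd_sub
        refine ⟨1 - r / p + k₁ - 1, ?_⟩
        have h4 := Int.mul_ediv_add_emod r p
        have h5 : j = r + i - k₁ * p := hj
        linarith [h4, h5, mul_comm (r / p) (p:ℤ)]
      by_cases hk2 : 1 ≤ k₂
      · have h7 : (q:ℤ) ≤ k₂ * q := le_mul_of_one_le_left hq'.le hk2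
        have hlt : r + i < g := by linarith
        rw [hmi, fz_eval hx m (by omega) (by rw [← hgg]; linarith)]
        rw [← hgg]
        unfold Wd
        rw [← hk₁, if_neg (by omega)]
        rw [show r + i - k₁ * p = j from rfl]
        rw [hrhs]
        exact (hagr j hj0 hjn).symm
      · have hk2' : k₂ = 0 := by omega
        have hge : g ≤ r + i := by rw [hrep, hk2']; linarith
        have hmi2 : m + i = e + (r + i - g) := by omega
        rw [hmi2, fz_at_marker hn1 hnp hnq hcop hagr hx (nxtZ_mem hx m) (by omega) (by omega)]
        rw [hrhs]
        congr 1
        rw [hrep, hk2']; ring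
  · push_neg at hcase
    refine ⟨y₂, Or.inr rfl, (r - k₁ * p) % q, ?_⟩
    intro i hi0 hin
    have hmi : m + i = a + (r + i) := by omega
    have hdvd_r2 : (q:ℤ) ∣ ((r - k₁ * p) - (r - k₁ * p) % q) :=
      ⟨(r - k₁ * p) / q, by have := Int.mul_ediv_add_emod (r - k₁ * p) q; linarith⟩
    by_cases hlt : r + i < g
    · rw [hmi, fz_eval hx m (by omega) (by rw [← hgg]; linarith)]
      rw [← hgg]
      unfold Wd
      rw [← hk₁, if_neg (by omega)]
      rw [BEQ.per_emod hq' hper2 (r + i - k₁ * p), BEQ.per_emod hq' hper2 ((r - k₁*p) % q + i)]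
      congr 1
      apply emod_eq_of_dvd_sub
      have heq : r + i - k₁ * p - ((r - k₁ * p) % q + i) = (r - k₁ * p) - (r - k₁ * p) % q := by
        ring
      rw [heq]; exact hdvd_r2
    · push_neg at hlt
      set j := r + i - g with hj
      have hj0 : 0 ≤ j := by omega
      have hjn : j < n := by omega
      have hmi2 : m + i = e + j := by omega
      rw [hmi2, fz_at_marker hn1 hnp hnq hcop hagr hx (nxtZ_mem hx m) hj0 hjn]
      rw [hagr j hj0 hjn]
      rw [BEQ.per_emod hq' hper2 ((r - k₁*p) % q + i), BEQ.per_emod hq' hper2 j]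
      congr 1
      apply emod_eq_of_dvd_sub
      refine ⟨(r - k₁ * p) / q - k₂, ?_⟩
      have h5 := Int.mul_ediv_add_emod (r - k₁ * p) q
      have h6 : j = r - k₁ * p + i - k₂ * q := by rw [hj, hrep]; ring
      linarith [mul_comm ((r - k₁ * p) / q) (q:ℤ)]

end window

end filling
section backward

open Classical

lemma measurableSet_freePart : MeasurableSet FreePart := by
  have : FreePart = ⋂ (s : ℤ), ⋂ (_ : s ≠ 0), {x : ℤ → Bool | shift s x = x}ᶜ := by
    ext x
    simp only [FreePart, Set.mem_setOf_eq, Set.mem_iInter, Set.mem_compl_iff]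
  rw [this]
  refine MeasurableSet.iInter fun s => MeasurableSet.iInter fun _ => MeasurableSet.compl ?_
  have : {x : ℤ → Bool | shift s x = x} = ⋂ (m : ℤ), ⋃ (v : Bool),
      ((fun x : ℤ → Bool => x (m + s)) ⁻¹' {v} ∩ (fun x : ℤ → Bool => x m) ⁻¹' {v}) := by
    ext x
    simp only [Set.mem_setOf_eq, Set.mem_iInter, Set.mem_iUnion, Set.mem_inter_iff,
      Set.mem_preimage, Set.mem_singleton_iff]
    constructor
    · intro h m
      exact ⟨x m, by rw [← congrFun h m]; rfl, rfl⟩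
    · intro h
      funext m
      obtain ⟨v, h1, h2⟩ := h m
      show x (m + s) = x m
      rw [h1, h2]
  rw [this]
  exact MeasurableSet.iInter fun m => MeasurableSet.iUnion fun v =>
    ((measurable_pi_apply (m + s)) (measurableSet_singleton v)).inter
      ((measurable_pi_apply m) (measurableSet_singleton v))

lemma measurable_fz {b : ℕ} (N p q : ℕ) (y₁ y₂ : ℤ → Fin b) :
    Measurable (fz N p q y₁ y₂) := by
  apply measurable_pi_lambda
  intro m
  have hms : ∀ (c : ℤ), MeasurableSet {x : ℤ → Bool | shift c x ∈ Mk N ∨ x ∉ FreePart} := by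
    intro c
    have : {x : ℤ → Bool | shift c x ∈ Mk N ∨ x ∉ FreePart} =
        (shift c) ⁻¹' (Mk N) ∪ FreePartᶜ := by
      ext x; simp [Set.mem_union, Set.mem_preimage]
    rw [this]
    exact ((BEQ.measurable_shift c) (measurableSet_Mk N)).union measurableSet_freePart.compl
  have h1 : Measurable fun x : ℤ → Bool => Nat.find (prevD_ex N x m) := by
    exact Measurable.find (mβ := ⊤) (f := fun (n : ℕ) x => n)
      (p := fun d (x : ℤ → Bool) => shift (m - d) x ∈ Mk N ∨ x ∉ FreePart)
      (fun _ => measurable_const) (fun d => hms (m - d)) (fun x => prevD_ex N x m)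
  have h2 : Measurable fun x : ℤ → Bool => Nat.find (nxtD_ex N x m) := by
    exact Measurable.find (mβ := ⊤) (f := fun (n : ℕ) x => n)
      (p := fun d (x : ℤ → Bool) => shift (m + 1 + d) x ∈ Mk N ∨ x ∉ FreePart)
      (fun _ => measurable_const) (fun d => hms (m + 1 + d)) (fun x => nxtD_ex N x m)
  have hco : (fun x : ℤ → Bool => fz N p q y₁ y₂ x m) =
      (fun dd : ℕ × ℕ => Wd p q y₁ y₂ ((m + 1 + (dd.2 : ℤ)) - (m - (dd.1 : ℤ))) (m - (m - (dd.1 : ℤ)))) ∘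
      (fun x => (Nat.find (prevD_ex N x m), Nat.find (nxtD_ex N x m))) := by
    funext x
    simp only [fz, prevZ, nxtZ, Function.comp_apply]
  rw [hco]
  exact (measurable_of_countable _).comp (h1.prodMk h2)

lemma fz_mem_sft {b L k : ℕ} {P : Fin k → Fin L → Fin b} {p q n : ℕ} {y₁ y₂ : ℤ → Fin b}
    (hL : 1 ≤ L) (hLn : L ≤ n) (hnp : n < p) (hnq : n < q) (hcop : Nat.Coprime p q)
    (hy₁ : y₁ ∈ SFT P) (hy₂ : y₂ ∈ SFT P)
    (hper1 : ∀ m, y₁ (m + (p:ℤ)) = y₁ m) (hper2 : ∀ m, y₂ (m + (q:ℤ)) = y₂ m)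
    (hagr : ∀ i : ℤ, 0 ≤ i → i < n → y₁ i = y₂ i)
    {x : ℤ → Bool} (hx : x ∈ FreePart) : fz (p*q) p q y₁ y₂ x ∈ SFT P := by
  rintro jj ⟨m, hm⟩
  obtain ⟨z, hz, c, hc⟩ := window_lemma (by omega) hnp hnq hcop hper1 hper2 hagr hx m
  have hocc : Occurs (P jj) z := by
    refine ⟨c, fun i => ?_⟩
    have hi1 : (0:ℤ) ≤ (i : ℤ) := by positivity
    have hi2 : ((i : ℕ) : ℤ) < n := by
      have : (i : ℕ) < L := i.2
      exact_mod_cast lt_of_lt_of_le this hLn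
    rw [← hc (i : ℤ) hi1 hi2]
    exact hm i
  rcases hz with rfl | rfl
  · exact hy₁ jj hocc
  · exact hy₂ jj hocc

lemma fz_equivariant {b : ℕ} (N p q : ℕ) (y₁ y₂ : ℤ → Fin b) {x : ℤ → Bool}
    (hx : x ∈ FreePart) (s m : ℤ) :
    fz N p q y₁ y₂ (shift s x) m = fz N p q y₁ y₂ x (m + s) := by
  simp only [fz, prevZ_equiv hx s m, nxtZ_equiv hx s m]
  rw [show nxtZ N x (m + s) - s - (prevZ N x (m + s) - s) = nxtZ N x (m + s) - prevZ N x (m + s) by ring,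
    show m - (prevZ N x (m + s) - s) = m + s - prevZ N x (m + s) by ring]

lemma backward_direction {b L k : ℕ} {P : Fin k → Fin L → Fin b} (hL : 1 ≤ L)
    {n p q : ℕ} (hLn : L ≤ n) (hnp : n < p) (hnq : n < q) (hcop : Nat.gcd p q = 1)
    {y₁ y₂ : ℤ → Fin b} (hy₁ : y₁ ∈ SFT P) (hy₂ : y₂ ∈ SFT P)
    (hper1 : ∀ m : ℤ, y₁ (m + (p:ℤ)) = y₁ m) (hper2 : ∀ m : ℤ, y₂ (m + (q:ℤ)) = y₂ m)
    (hagrN : ∀ i : ℕ, i < n → y₁ (i : ℤ) = y₂ (i : ℤ)) :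
    ∃ f : {x : ℤ → Bool // x ∈ FreePart} → {y : ℤ → Fin b // y ∈ SFT P},
      Measurable f ∧ EquivariantOn (SFT P) f := by
  have hagr : ∀ i : ℤ, 0 ≤ i → i < n → y₁ i = y₂ i := by
    intro i h0 hn
    obtain ⟨j, rfl⟩ := Int.eq_ofNat_of_zero_le h0
    exact hagrN j (by exact_mod_cast hn)
  have hsft : ∀ xx : {x : ℤ → Bool // x ∈ FreePart}, fz (p*q) p q y₁ y₂ xx.1 ∈ SFT P :=
    fun xx => fz_mem_sft hL hLn hnp hnq hcop hy₁ hy₂ hper1 hper2 hagr xx.2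
  refine ⟨fun xx => ⟨fz (p*q) p q y₁ y₂ xx.1, hsft xx⟩, ?_, ?_⟩
  · exact Measurable.subtype_mk ((measurable_fz (p*q) p q y₁ y₂).comp measurable_subtype_coe)
  · intro xx s h
    show fz (p*q) p q y₁ y₂ (shift s xx.1) = shift s (fz (p*q) p q y₁ y₂ xx.1)
    funext m
    exact fz_equivariant (p*q) p q y₁ y₂ xx.2 s m

end backward
section rotation

open MeasureTheory Filter Pointwise

lemma dense_zsmul_irrational {γ : ℝ} (hγ : Irrational γ) :
    Dense (Set.range fun kk : ℤ => kk • ((γ : AddCircle (1:ℝ)))) := by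
  have hS : Dense ((AddSubgroup.closure ({1, γ} : Set ℝ) : Set ℝ)) := by
    rcases (AddSubgroup.closure ({1, γ} : Set ℝ)).dense_or_cyclic with h | ⟨a, ha⟩
    · exact h
    · exfalso
      have h1 : (1:ℝ) ∈ AddSubgroup.closure ({1, γ} : Set ℝ) :=
        AddSubgroup.subset_closure (by simp)
      have h2 : γ ∈ AddSubgroup.closure ({1, γ} : Set ℝ) :=
        AddSubgroup.subset_closure (by simp)
      rw [ha, ← AddSubgroup.zmultiples_eq_closure, AddSubgroup.mem_zmultiples_iff] at h1 h2
      obtain ⟨m, hm⟩ := h1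
      obtain ⟨l, hl⟩ := h2
      rw [zsmul_eq_mul] at hm hl
      have hm0 : (m : ℝ) ≠ 0 := by
        intro h
        rw [h, zero_mul] at hm
        exact one_ne_zero hm.symm
      apply hγ
      refine ⟨(l : ℚ) / (m : ℚ), ?_⟩
      have hmq : ((m:ℚ):ℝ) ≠ 0 := by push_cast; exact hm0
      push_cast
      rw [div_eq_iff (by push_cast at hmq ⊢; exact_mod_cast hm0)]
      rw [← hl]
      have : a = 1 / m := by field_simp at hm ⊢; linarith [hm]
      rw [this]
      field_simp
  have hcont : Continuous ((↑) : ℝ → AddCircle (1:ℝ)) := continuous_quotient_mk'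
  have hsurj : Function.Surjective ((↑) : ℝ → AddCircle (1:ℝ)) := QuotientAddGroup.mk_surjective
  have himg : Dense (((↑) : ℝ → AddCircle (1:ℝ)) '' (AddSubgroup.closure ({1, γ} : Set ℝ) : Set ℝ)) :=
    hsurj.denseRange.dense_image hcont hS
  apply Dense.mono ?_ himg
  rintro _ ⟨r, hr, rfl⟩
  obtain ⟨mm, nn, hmn⟩ := AddSubgroup.mem_closure_pair.mp hr
  refine ⟨nn, ?_⟩
  rw [← hmn, AddCircle.coe_add, AddCircle.coe_zsmul, AddCircle.coe_zsmul]
  have h1 : ((1:ℝ) : AddCircle (1:ℝ)) = 0 := AddCircle.coe_period 1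
  rw [h1, smul_zero, zero_add]

lemma preimage_add_zsmul_eq_self {s : Set (AddCircle (1:ℝ))} {γ : ℝ}
    (hinv : (fun y : AddCircle (1:ℝ) => y + ↑γ) ⁻¹' s = s) (kk : ℤ) :
    (fun y : AddCircle (1:ℝ) => y + kk • ((γ : AddCircle (1:ℝ)))) ⁻¹' s = s := by
  induction kk using Int.induction_on with
  | zero => simp
  | succ i ih =>
    have hco : (fun y : AddCircle (1:ℝ) => y + ((i:ℤ)+1) • ((γ : AddCircle (1:ℝ)))) =
        (fun y => y + (i:ℤ) • ((γ : AddCircle (1:ℝ)))) ∘ (fun y => y + ↑γ) := by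
      funext y; simp only [Function.comp, add_zsmul, one_zsmul]; abel
    rw [hco, Set.preimage_comp, ih, hinv]
  | pred i ih =>
    have hco : (fun y : AddCircle (1:ℝ) => y + (-(i:ℤ)-1) • ((γ : AddCircle (1:ℝ)))) =
        (fun y => y + (-(i:ℤ)) • ((γ : AddCircle (1:ℝ)))) ∘ (fun y => y + (-1:ℤ) • (γ : AddCircle (1:ℝ))) := by
      funext y; simp only [Function.comp]; rw [add_assoc, ← add_zsmul]; ring_nf
    have hneg : (fun y : AddCircle (1:ℝ) => y + (-1:ℤ) • (γ : AddCircle (1:ℝ))) ⁻¹' s = s := by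
      have : s = (fun y : AddCircle (1:ℝ) => y + ↑γ) ⁻¹' s := hinv.symm
      conv_lhs => rw [this]
      rw [← Set.preimage_comp]
      have : ((fun y : AddCircle (1:ℝ) => y + ↑γ) ∘ fun y => y + (-1:ℤ) • (γ : AddCircle (1:ℝ))) = id := by
        funext y; simp
      rw [this, Set.preimage_id]
    rw [hco, Set.preimage_comp, ih, hneg]

theorem ergodic_irrational_rotation {γ : ℝ} (hγ : Irrational γ) :
    Ergodic (fun y : AddCircle (1:ℝ) => y + ↑γ) volume := by
  refine ⟨measurePreserving_add_right volume _, ⟨fun s hs hinv => ?_⟩⟩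
  rw [Filter.eventuallyConst_set']
  set f : AddCircle (1:ℝ) → C(AddCircle (1:ℝ), AddCircle (1:ℝ)) :=
    fun z => ⟨fun y => y + z, by continuity⟩ with hf_def
  have hf : Continuous f := by
    apply ContinuousMap.continuous_of_continuous_uncurry
    exact continuous_snd.add continuous_fst
  have hH : IsClosed {z | (f z) ⁻¹' s =ᵐ[volume] s} :=
    isClosed_setOf_preimage_ae_eq hf (fun z => measurePreserving_add_right volume z) s
      hs.nullMeasurableSet (measure_ne_top _ _)
  have hsub : (Set.range fun kk : ℤ => kk • ((γ : AddCircle (1:ℝ)))) ⊆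
      {z | (f z) ⁻¹' s =ᵐ[volume] s} := by
    rintro _ ⟨kk, rfl⟩
    show (fun y => y + kk • ((γ : AddCircle (1:ℝ)))) ⁻¹' s =ᵐ[volume] s
    rw [preimage_add_zsmul_eq_self hinv kk]
    exact Filter.EventuallyEq.rfl
  have huniv : {z | (f z) ⁻¹' s =ᵐ[volume] s} = Set.univ := by
    have hd : Dense {z | (f z) ⁻¹' s =ᵐ[volume] s} :=
      Dense.mono hsub (dense_zsmul_irrational hγ)
    rw [← hH.closure_eq]
    exact hd.closure_eq
  apply AddCircle.ae_empty_or_univ_of_forall_vadd_ae_eq_self hs.nullMeasurableSet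
    (l := atTop) (u := fun j : ℕ => (((1:ℝ)/((j:ℝ)+1)) : AddCircle (1:ℝ)))
  · intro j
    have hvadd : ∀ (z : AddCircle (1:ℝ)), z +ᵥ s = (fun y => y + (-z)) ⁻¹' s := by
      intro z
      ext y
      rw [Set.mem_vadd_set_iff_neg_vadd_mem]
      simp [vadd_eq_add, add_comm]
    rw [hvadd]
    have := huniv ▸ Set.mem_univ (-(((1:ℝ)/((j:ℝ)+1)) : AddCircle (1:ℝ)))
    exact this
  · have horder : ∀ j : ℕ, addOrderOf ((((1:ℝ)/((j:ℝ)+1)) : AddCircle (1:ℝ))) = j + 1 := by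
      intro j
      have : ((1:ℝ)/((j:ℝ)+1)) = (1:ℝ) / ((j+1 : ℕ) : ℝ) := by push_cast; ring_nf
      rw [this]
      exact AddCircle.addOrderOf_period_div (Nat.succ_pos j)
    have : (addOrderOf ∘ fun j : ℕ => (((1:ℝ)/((j:ℝ)+1)) : AddCircle (1:ℝ))) = fun j => j + 1 := by
      funext j; exact horder j
    rw [this]
    exact Filter.tendsto_add_atTop_nat 1

end rotation
section coding

open MeasureTheory Filter Pointwise Classical
open scoped ENNReal

noncomputable def alc : AddCircle (1:ℝ) := ((Real.sqrt 2 : ℝ) : AddCircle (1:ℝ))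

def Iset : Set (AddCircle (1:ℝ)) := Metric.closedBall 0 (1/4)

lemma measurableSet_Iset : MeasurableSet Iset :=
  Metric.isClosed_closedBall.measurableSet

lemma vol_Iset : volume Iset = ENNReal.ofReal (1/2) := by
  rw [Iset, AddCircle.volume_closedBall]
  norm_num

open Classical in
noncomputable def theta (z : AddCircle (1:ℝ)) (m : ℤ) : Bool := decide (z + m • alc ∈ Iset)

open Classical in
lemma theta_apply (z : AddCircle (1:ℝ)) (m : ℤ) : theta z m = decide (z + m • alc ∈ Iset) := rfl

lemma coe_zsmul_alc (s : ℤ) : s • alc = (((s : ℝ) * Real.sqrt 2 : ℝ) : AddCircle (1:ℝ)) := by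
  rw [alc, ← AddCircle.coe_zsmul]
  congr 1
  rw [zsmul_eq_mul]

lemma irrational_zsmul_sqrt {s : ℤ} (hs : s ≠ 0) : Irrational ((s:ℝ) * Real.sqrt 2) :=
  irrational_sqrt_two.intCast_mul hs

lemma theta_shift (z : AddCircle (1:ℝ)) (s : ℤ) : theta (z + s • alc) = shift s (theta z) := by
  funext m
  rw [theta_apply]
  show _ = theta z (m + s)
  rw [theta_apply]
  apply decide_eq_decide.mpr
  rw [add_zsmul, add_assoc, add_comm (s • alc) (m • alc)]

lemma measurable_theta : Measurable theta := by
  apply measurable_pi_lambda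
  intro m
  apply measurable_to_countable'
  intro v
  have h1 : Measurable (fun z : AddCircle (1:ℝ) => z + m • alc) := measurable_add_const _
  cases v
  · have : (fun z : AddCircle (1:ℝ) => theta z m) ⁻¹' {false} =
        (fun z : AddCircle (1:ℝ) => z + m • alc) ⁻¹' Isetᶜ := by
      ext z; simp [theta_apply]
    rw [this]; exact h1 measurableSet_Iset.compl
  · have : (fun z : AddCircle (1:ℝ) => theta z m) ⁻¹' {true} =
        (fun z : AddCircle (1:ℝ) => z + m • alc) ⁻¹' Iset := by
      ext z; simp [theta_apply]
    rw [this]; exact h1 measurableSet_Iset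

def BadSet (s : ℤ) : Set (AddCircle (1:ℝ)) := {z | shift s (theta z) = theta z}

lemma measurableSet_BadSet (s : ℤ) : MeasurableSet (BadSet s) := by
  have : BadSet s = ⋂ (m : ℤ), ⋃ (v : Bool),
      ((fun z => theta z (m + s)) ⁻¹' {v} ∩ (fun z => theta z m) ⁻¹' {v}) := by
    ext z
    simp only [BadSet, Set.mem_setOf_eq, Set.mem_iInter, Set.mem_iUnion, Set.mem_inter_iff,
      Set.mem_preimage, Set.mem_singleton_iff]
    constructor
    · intro h m
      exact ⟨theta z m, by rw [← congrFun h m]; rfl, rfl⟩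
    · intro h
      funext m
      obtain ⟨v, h1, h2⟩ := h m
      show theta z (m + s) = theta z m
      rw [h1, h2]
  rw [this]
  exact MeasurableSet.iInter fun m => MeasurableSet.iUnion fun v =>
    ((measurable_theta.eval (a := m + s)) (measurableSet_singleton v)).inter
      ((measurable_theta.eval (a := m)) (measurableSet_singleton v))

lemma shift_cancel {α : Type*} {t : ℤ} {u v : ℤ → α} (h : shift t u = shift t v) : u = v := by
  have := congrArg (shift (-t)) h
  rwa [BEQ.shift_shift, BEQ.shift_shift, neg_add_cancel, BEQ.shift_zero, BEQ.shift_zero] at this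

lemma badSet_null {s : ℤ} (hs : s ≠ 0) : volume (BadSet s) = 0 := by
  have herg := ergodic_irrational_rotation irrational_sqrt_two
  have hinv : (fun z : AddCircle (1:ℝ) => z + ((Real.sqrt 2 : ℝ) : AddCircle (1:ℝ))) ⁻¹' (BadSet s)
      = BadSet s := by
    ext z
    simp only [Set.mem_preimage, BadSet, Set.mem_setOf_eq]
    have h1 : theta (z + ((Real.sqrt 2 : ℝ) : AddCircle (1:ℝ))) = shift 1 (theta z) := by
      have := theta_shift z 1
      rwa [one_zsmul, alc] at this
    rw [h1]
    constructor
    · intro h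
      apply shift_cancel (t := 1)
      rw [BEQ.shift_shift, add_comm, ← BEQ.shift_shift]
      exact h
    · intro h
      rw [BEQ.shift_shift, add_comm, ← BEQ.shift_shift, h]
  rcases herg.ae_empty_or_univ (measurableSet_BadSet s) hinv with h | h
  · exact ae_eq_empty.mp h
  · exfalso
    have hnull : volume ((BadSet s)ᶜ) = 0 := ae_eq_univ.mp h
    have hsymm : ((fun z : AddCircle (1:ℝ) => z + s • alc) ⁻¹' Iset \ Iset) ∪
        (Iset \ (fun z : AddCircle (1:ℝ) => z + s • alc) ⁻¹' Iset) ⊆ (BadSet s)ᶜ := by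
      intro z hz
      simp only [Set.mem_compl_iff, BadSet, Set.mem_setOf_eq]
      intro hbad
      have h0 := congrFun hbad 0
      have e1 : shift s (theta z) 0 = decide (z + s • alc ∈ Iset) := by
        show theta z (0 + s) = _
        rw [theta_apply]
        apply decide_eq_decide.mpr
        rw [zero_add]
      have e2 : theta z 0 = decide (z ∈ Iset) := by
        rw [theta_apply]
        apply decide_eq_decide.mpr
        rw [zero_zsmul, add_zero]
      rw [e1, e2] at h0
      have hiff : (z + s • alc ∈ Iset) ↔ (z ∈ Iset) := decide_eq_decide.mp h0
      rcases hz with hz | hz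
      · exact hz.2 (hiff.mp hz.1)
      · exact hz.2 (hiff.mpr hz.1)
    have hae : (fun z : AddCircle (1:ℝ) => z + s • alc) ⁻¹' Iset =ᵐ[volume] Iset := by
      apply (MeasureTheory.ae_eq_set).mpr
      constructor
      · exact measure_mono_null (fun z hz => hsymm (Or.inl hz)) hnull
      · exact measure_mono_null (fun z hz => hsymm (Or.inr hz)) hnull
    have herg2 := ergodic_irrational_rotation (irrational_zsmul_sqrt hs)
    rw [coe_zsmul_alc s] at hae
    rcases herg2.quasiErgodic.ae_empty_or_univ₀ measurableSet_Iset.nullMeasurableSet hae with h2 | h2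
    · have h3 : volume Iset = 0 := ae_eq_empty.mp h2
      rw [vol_Iset, ENNReal.ofReal_eq_zero] at h3
      norm_num at h3
    · have hIc : volume (Isetᶜ) = 0 := ae_eq_univ.mp h2
      have hle : volume (Set.univ : Set (AddCircle (1:ℝ))) ≤ volume Iset + volume Isetᶜ := by
        rw [← Set.union_compl_self Iset]
        exact measure_union_le _ _
      rw [AddCircle.measure_univ, vol_Iset, hIc, add_zero] at hle
      rw [ENNReal.ofReal_le_ofReal_iff (by norm_num)] at hle
      norm_num at hle

def Gset : Set (AddCircle (1:ℝ)) := {z | theta z ∈ FreePart}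

lemma measurableSet_Gset : MeasurableSet Gset :=
  measurable_theta measurableSet_freePart

lemma Gset_compl_null : volume (Gsetᶜ) = 0 := by
  have hsub : Gsetᶜ ⊆ ⋃ (s : {t : ℤ // t ≠ 0}), BadSet s.1 := by
    intro z hz
    simp only [Gset, Set.mem_compl_iff, Set.mem_setOf_eq, FreePart] at hz
    push_neg at hz
    obtain ⟨s, hs0, hs⟩ := hz
    exact Set.mem_iUnion.mpr ⟨⟨s, hs0⟩, hs⟩
  apply measure_mono_null hsub
  exact measure_iUnion_null fun s => badSet_null s.2

lemma Gset_pos : 0 < volume Gset := by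
  have hle : volume (Set.univ : Set (AddCircle (1:ℝ))) ≤ volume Gset + volume Gsetᶜ := by
    rw [← Set.union_compl_self Gset]
    exact measure_union_le _ _
  rw [AddCircle.measure_univ, Gset_compl_null, add_zero] at hle
  calc (0:ℝ≥0∞) < ENNReal.ofReal 1 := by simp
    _ ≤ volume Gset := hle

lemma rec_residue {C : Set (AddCircle (1:ℝ))} (hC : MeasurableSet C) (hpos : 0 < volume C)
    (d : ℕ) (hd : 0 < d) (r : ℤ) :
    ∃ t : ℤ, (∃ kk : ℤ, t = kk * d + r) ∧
      0 < volume (C ∩ (fun z => z + t • alc) ⁻¹' C) := by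
  have hd0 : (d : ℤ) ≠ 0 := by exact_mod_cast hd.ne'
  set gd : ℝ := (((d:ℤ):ℝ) * Real.sqrt 2) with hgd
  have herg := ergodic_irrational_rotation (irrational_zsmul_sqrt (s := (d:ℤ)) hd0)
  set D := ⋃ kk : ℤ, (fun z : AddCircle (1:ℝ) => z + (kk * d + r) • alc) ⁻¹' C with hD
  have hDm : MeasurableSet D :=
    MeasurableSet.iUnion fun kk => (measurable_add_const _) hC
  have hsm : ((d:ℤ)) • alc = ((gd : ℝ) : AddCircle (1:ℝ)) := coe_zsmul_alc (d:ℤ)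
  have hstep : ∀ (kk : ℤ) (z : AddCircle (1:ℝ)),
      z + ((gd : ℝ) : AddCircle (1:ℝ)) + (kk * d + r) • alc = z + ((kk+1) * d + r) • alc := by
    intro kk z
    conv_rhs => rw [show ((kk+1) * (d:ℤ) + r) = (d:ℤ) + (kk * (d:ℤ) + r) by ring, add_zsmul, hsm]
    abel
  have hinv : (fun z : AddCircle (1:ℝ) => z + ((gd : ℝ) : AddCircle (1:ℝ))) ⁻¹' D = D := by
    ext z
    simp only [hD, Set.mem_preimage, Set.mem_iUnion]
    constructor
    · rintro ⟨kk, hkk⟩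
      exact ⟨kk + 1, by rwa [hstep kk z] at hkk⟩
    · rintro ⟨kk, hkk⟩
      refine ⟨kk - 1, ?_⟩
      rw [hstep (kk - 1) z, sub_add_cancel]
      exact hkk
  have hDpos : 0 < volume D := by
    have hsub : (fun z : AddCircle (1:ℝ) => z + r • alc) ⁻¹' C ⊆ D := by
      intro z hz
      refine Set.mem_iUnion.mpr ⟨0, ?_⟩
      rwa [show ((0:ℤ) * d + r) = r by ring]
    have hmp : volume ((fun z : AddCircle (1:ℝ) => z + r • alc) ⁻¹' C) = volume C :=
      (measurePreserving_add_right volume (r • alc)).measure_preimage hC.nullMeasurableSet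
    calc (0:ℝ≥0∞) < volume C := hpos
      _ = _ := hmp.symm
      _ ≤ volume D := measure_mono hsub
  rcases herg.ae_empty_or_univ hDm hinv with h | h
  · exact absurd (ae_eq_empty.mp h) hDpos.ne'
  · have hDc : volume Dᶜ = 0 := ae_eq_univ.mp h
    have hCD : 0 < volume (C ∩ D) := by
      have h1 : volume C ≤ volume (C ∩ D) + volume (C ∩ Dᶜ) := by
        conv_lhs => rw [← Set.inter_union_compl C D]
        exact measure_union_le _ _
      have h2 : volume (C ∩ Dᶜ) = 0 := measure_mono_null Set.inter_subset_right hDc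
      rw [h2, add_zero] at h1
      exact lt_of_lt_of_le hpos h1
    have hU : C ∩ D = ⋃ kk : ℤ, (C ∩ (fun z : AddCircle (1:ℝ) => z + (kk * d + r) • alc) ⁻¹' C) := by
      rw [hD, Set.inter_iUnion]
    rw [hU] at hCD
    by_contra hcon
    push_neg at hcon
    have : ∀ kk : ℤ, volume (C ∩ (fun z : AddCircle (1:ℝ) => z + (kk * d + r) • alc) ⁻¹' C) = 0 := by
      intro kk
      have := hcon (kk * d + r) ⟨kk, rfl⟩
      exact le_antisymm this zero_le
    rw [measure_iUnion_null this] at hCD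
    exact lt_irrefl _ hCD

end coding
section forward

open MeasureTheory Filter Pointwise Classical
open scoped ENNReal

lemma forward_direction {b L k : ℕ} {P : Fin k → Fin L → Fin b} (hb : 1 ≤ b) (hL : 1 ≤ L)
    (f : {x : ℤ → Bool // x ∈ FreePart} → {y : ℤ → Fin b // y ∈ SFT P})
    (hmeas : Measurable f) (hequiv : EquivariantOn (SFT P) f) :
    ∃ n p q : ℕ, L ≤ n ∧ n < p ∧ n < q ∧ Nat.gcd p q = 1 ∧
      ∃ y₁ ∈ SFT P, ∃ y₂ ∈ SFT P,
        (∀ m : ℤ, y₁ (m + (p : ℤ)) = y₁ m) ∧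
        (∀ m : ℤ, y₂ (m + (q : ℤ)) = y₂ m) ∧
        (∀ i : ℕ, i < n → y₁ (i : ℤ) = y₂ (i : ℤ)) := by
  classical
  set F : AddCircle (1:ℝ) → (ℤ → Fin b) := fun z =>
    if h : z ∈ Gset then (f ⟨theta z, h⟩ : ℤ → Fin b) else (fun _ => ⟨0, hb⟩) with hF
  have hFmeas : Measurable F := by
    have h1 : Measurable fun zh : ↥Gset => (⟨theta zh.1, zh.2⟩ : {x : ℤ → Bool // x ∈ FreePart}) :=
      Measurable.subtype_mk (measurable_theta.comp measurable_subtype_coe)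
    have hFeq : F = fun z => if hx : z ∈ Gset
        then (fun zh : ↥Gset => ((f ⟨theta zh.1, zh.2⟩ : {y // y ∈ SFT P}) : ℤ → Fin b)) ⟨z, hx⟩
        else (fun _ : ↥(Gsetᶜ) => (fun _ : ℤ => (⟨0, hb⟩ : Fin b))) ⟨z, hx⟩ := rfl
    rw [hFeq]
    exact Measurable.dite (measurable_subtype_coe.comp (hmeas.comp h1)) measurable_const
      measurableSet_Gset
  have hFG : ∀ {z} (h : z ∈ Gset), F z = (f ⟨theta z, h⟩ : ℤ → Fin b) := by
    intro z h; simp only [hF, dif_pos h]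
  have hFsft : ∀ {z}, z ∈ Gset → F z ∈ SFT P := by
    intro z h; rw [hFG h]; exact (f ⟨theta z, h⟩).2
  have hFshift : ∀ {z} (h : z ∈ Gset) (t : ℤ), F (z + t • alc) = shift t (F z) := by
    intro z h t
    have hθ : theta (z + t • alc) = shift t (theta z) := theta_shift z t
    have hfree : shift t (theta z) ∈ FreePart := BEQ.freePart_shift h t
    have h2 : (z + t • alc) ∈ Gset := by
      show theta _ ∈ FreePart; rw [hθ]; exact hfree
    rw [hFG h2, hFG h]
    have hsub : (⟨theta (z + t • alc), h2⟩ : {x : ℤ → Bool // x ∈ FreePart}) =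
        ⟨shift t (theta z), hfree⟩ := Subtype.ext hθ
    rw [hsub]
    exact hequiv ⟨theta z, h⟩ t hfree
  -- a positive measure cylinder
  set Cu : (Fin L → Fin b) → Set (AddCircle (1:ℝ)) := fun u =>
    Gset ∩ ⋂ i : Fin L, (fun z => F z ((i:ℕ):ℤ)) ⁻¹' {u i} with hCu
  have hCm : ∀ u, MeasurableSet (Cu u) := fun u =>
    measurableSet_Gset.inter (MeasurableSet.iInter fun i =>
      (hFmeas.eval) (measurableSet_singleton _))
  have hex : ∃ u, 0 < volume (Cu u) := by
    by_contra hcon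
    push_neg at hcon
    have hz : ∀ u, volume (Cu u) = 0 := fun u => le_antisymm (hcon u) zero_le
    have hcover : Gset ⊆ ⋃ u : Fin L → Fin b, Cu u := by
      intro z hzG
      refine Set.mem_iUnion.mpr ⟨fun i => F z ((i:ℕ):ℤ), hzG, ?_⟩
      exact Set.mem_iInter.mpr fun i => rfl
    have := measure_mono_null hcover (measure_iUnion_null hz)
    exact absurd this Gset_pos.ne'
  obtain ⟨u, hu⟩ := hex
  -- key recurrence extraction
  have key : ∀ (d : ℕ), 0 < d → ∀ r : ℤ, ∃ (t : ℤ) (y : ℤ → Fin b), (∃ kk : ℤ, t = kk * d + r) ∧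
      y ∈ SFT P ∧ (∀ i : Fin L, y ((i:ℕ):ℤ) = u i) ∧ (∀ i : Fin L, y (t + ((i:ℕ):ℤ)) = u i) := by
    intro d hd r
    obtain ⟨t, hres, hpos⟩ := rec_residue (hCm u) hu d hd r
    have hne : (Cu u ∩ (fun z => z + t • alc) ⁻¹' (Cu u)).Nonempty := by
      by_contra hemp
      rw [Set.not_nonempty_iff_eq_empty] at hemp
      rw [hemp] at hpos
      simp at hpos
    obtain ⟨z, hz1, hz2⟩ := hne
    obtain ⟨hzG, hzc⟩ := hz1
    have hz2' : z + t • alc ∈ Cu u := hz2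
    obtain ⟨hz2G, hz2c⟩ := hz2'
    refine ⟨t, F z, hres, hFsft hzG, ?_, ?_⟩
    · intro i
      have := Set.mem_iInter.mp hzc i
      simpa using this
    · intro i
      have h3 := Set.mem_iInter.mp hz2c i
      simp only [Set.mem_preimage, Set.mem_singleton_iff] at h3
      rw [hFshift hzG t] at h3
      have h4 : F z (((i:ℕ):ℤ) + t) = u i := h3
      rwa [add_comm] at h4
  -- sign normalization
  have norm : ∀ (t : ℤ) (y : ℤ → Fin b), t ≠ 0 → y ∈ SFT P →
      (∀ i : Fin L, y ((i:ℕ):ℤ) = u i) → (∀ i : Fin L, y (t + ((i:ℕ):ℤ)) = u i) →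
      ∃ (t' : ℤ) (y' : ℤ → Fin b), 0 < t' ∧ (t' = t ∨ t' = -t) ∧ y' ∈ SFT P ∧
        (∀ i : Fin L, y' ((i:ℕ):ℤ) = u i) ∧ (∀ i : Fin L, y' (t' + ((i:ℕ):ℤ)) = u i) := by
    intro t y ht hy h1 h2
    rcases lt_or_gt_of_ne ht with hneg | hpos
    · refine ⟨-t, shift t y, by omega, Or.inr rfl, BEQ.sft_shift hy t, ?_, ?_⟩
      · intro i
        show y (((i:ℕ):ℤ) + t) = u i
        rw [add_comm]; exact h2 i
      · intro i
        show y ((-t + ((i:ℕ):ℤ)) + t) = u i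
        rw [show (-t + ((i:ℕ):ℤ)) + t = ((i:ℕ):ℤ) by ring]
        exact h1 i
    · exact ⟨t, y, hpos, Or.inl rfl, hy, h1, h2⟩
  -- closing into a periodic point
  have mkper : ∀ (t : ℤ) (y : ℤ → Fin b), 0 < t → y ∈ SFT P →
      (∀ i : Fin L, y ((i:ℕ):ℤ) = u i) → (∀ i : Fin L, y (t + ((i:ℕ):ℤ)) = u i) →
      ∃ zz : ℤ → Fin b, zz ∈ SFT P ∧ (∀ m, zz (m + t) = zz m) ∧
        (∀ i : Fin L, zz ((i:ℕ):ℤ) = u i) := by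
    intro t y ht hy h1 h2
    have hagree : ∀ i : ℤ, 0 ≤ i → i < L → y (t + i) = y i := by
      intro i h0 hiL
      obtain ⟨j, rfl⟩ := Int.eq_ofNat_of_zero_le h0
      have hj : j < L := by exact_mod_cast hiL
      have e2 := h2 ⟨j, hj⟩
      have e1 := h1 ⟨j, hj⟩
      simp only [Fin.val_mk] at e1 e2
      rw [e2, e1]
    obtain ⟨zz, hzz, hper, hagr⟩ := BEQ.closing hy ht (le_refl L) hagree
    refine ⟨zz, hzz, hper, fun i => ?_⟩
    rw [hagr ((i:ℕ):ℤ) (by positivity) (by exact_mod_cast i.2)]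
    exact h1 i
  -- Step 1 : a positive period coprime to 2 (just nonzero needed)
  obtain ⟨t1, y1, ⟨kk1, hk1⟩, hy1, h11, h12⟩ := key 2 (by norm_num) 1
  have ht1ne : t1 ≠ 0 := by omega
  obtain ⟨t1', y1', ht1pos, _, hy1', h11', h12'⟩ := norm t1 y1 ht1ne hy1 h11 h12
  obtain ⟨z1, hz1sft, hz1per, hz1u⟩ := mkper t1' y1' ht1pos hy1' h11' h12'
  set p : ℕ := t1'.toNat * (L + 1) with hpdef
  have hpt : (p:ℤ) = ((L:ℤ) + 1) * t1' := by
    push_cast [hpdef]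
    rw [Int.toNat_of_nonneg ht1pos.le]
    ring
  have hz1p : ∀ m, z1 (m + (p:ℤ)) = z1 m := by
    intro m
    rw [hpt]
    exact BEQ.per_zmul hz1per ((L:ℤ) + 1) m
  have ht1n : 1 ≤ t1'.toNat := by omega
  have hpL : L < p := by
    calc L < L + 1 := Nat.lt_succ_self L
      _ ≤ t1'.toNat * (L + 1) := Nat.le_mul_of_pos_left _ ht1n
  have hp2 : 2 ≤ p := by omega
  -- Step 2 : residue 1 mod p
  obtain ⟨t2, y2, ⟨kk2, hk2⟩, hy2, h21, h22⟩ := key p (by omega) 1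
  have ht2ne : t2 ≠ 0 := by
    intro h0
    rw [h0] at hk2
    have hdvd : (p:ℤ) ∣ 1 := ⟨-kk2, by linarith⟩
    have := Int.le_of_dvd one_pos hdvd
    have hp2' : (2:ℤ) ≤ (p:ℤ) := by exact_mod_cast hp2
    omega
  obtain ⟨t2', y2', ht2pos, hres2, hy2', h21', h22'⟩ := norm t2 y2 ht2ne hy2 h21 h22
  obtain ⟨z2, hz2sft, hz2per, hz2u⟩ := mkper t2' y2' ht2pos hy2' h21' h22'
  -- choose a multiplier
  obtain ⟨pp, hpp⟩ : ∃ pp : ℕ, p = pp + 2 := ⟨p - 2, by omega⟩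
  have htn : ((t2'.toNat : ℤ)) = t2' := Int.toNat_of_nonneg ht2pos.le
  have ht2n1 : 1 ≤ t2'.toNat := by omega
  have hpLge : L ≤ p * L := Nat.le_mul_of_pos_left L (by omega)
  have hq_ex : ∃ (w : ℕ), 0 < w ∧ L < t2'.toNat * w ∧
      ∃ c : ℤ, ((t2'.toNat * w : ℕ) : ℤ) = c * p + 1 := by
    rcases hres2 with h | h
    · refine ⟨1 + p * L, by omega, ?_, ?_⟩
      · calc L < 1 + p * L := by omega
          _ ≤ t2'.toNat * (1 + p * L) := Nat.le_mul_of_pos_left _ ht2n1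
      · refine ⟨kk2 * (1 + (p:ℤ) * L) + L, ?_⟩
        push_cast
        rw [htn, h, hk2]
        ring
    · refine ⟨p * L + pp + 1, by omega, ?_, ?_⟩
      · calc L < p * L + pp + 1 := by omega
          _ ≤ t2'.toNat * (p * L + pp + 1) := Nat.le_mul_of_pos_left _ ht2n1
      · refine ⟨-kk2 * ((p:ℤ) * L + p - 1) - L - 1, ?_⟩
        have hw : ((p * L + pp + 1 : ℕ) : ℤ) = (p:ℤ) * L + p - 1 := by
          push_cast
          omega
        push_cast
        push_cast at hw
        rw [hw, htn, h, hk2]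
        ring
  obtain ⟨w, hw0, hwL, c, hc⟩ := hq_ex
  set q : ℕ := t2'.toNat * w with hqdef
  have hqt : (q:ℤ) = (w:ℤ) * t2' := by
    push_cast [hqdef]
    rw [Int.toNat_of_nonneg ht2pos.le]
    ring
  have hz2q : ∀ m, z2 (m + (q:ℤ)) = z2 m := by
    intro m
    rw [hqt]
    exact BEQ.per_zmul hz2per (w:ℤ) m
  have hgcd : Nat.gcd p q = 1 := by
    have d1 : ((Nat.gcd p q : ℕ) : ℤ) ∣ (p:ℤ) := Int.natCast_dvd_natCast.mpr (Nat.gcd_dvd_left p q)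
    have d2 : ((Nat.gcd p q : ℕ) : ℤ) ∣ (q:ℤ) := Int.natCast_dvd_natCast.mpr (Nat.gcd_dvd_right p q)
    have d3 : ((Nat.gcd p q : ℕ) : ℤ) ∣ ((q:ℤ) - c * p) := d2.sub (d1.mul_left c)
    have h4 : (q:ℤ) - c * p = 1 := by rw [hc]; ring
    rw [h4] at d3
    have : (Nat.gcd p q) ∣ 1 := by exact_mod_cast d3
    exact Nat.dvd_one.mp this
  refine ⟨L, p, q, le_refl L, hpL, hwL, hgcd, z1, hz1sft, z2, hz2sft, hz1p, hz2q, ?_⟩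
  intro i hiL
  have e1 := hz1u ⟨i, hiL⟩
  have e2 := hz2u ⟨i, hiL⟩
  simp only [Fin.val_mk] at e1 e2
  rw [e1, e2]

end forward
/-- There is a Borel equivariant map `F(2^ℤ) → Y` iff there are
`n, p, q` with `L ≤ n < p, q`, `gcd(p,q) = 1`, and points `y₁, y₂ ∈ Y` of periods
`p` and `q` respectively that agree on `[0, n)`. -/
theorem borel_equivariant_map_iff_two_periodic_points
    (b L k : ℕ) (hb : 1 ≤ b) (hL : 1 ≤ L) (P : Fin k → Fin L → Fin b) :
    (∃ f : {x : ℤ → Bool // x ∈ FreePart} → {y : ℤ → Fin b // y ∈ SFT P},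
       Measurable f ∧ EquivariantOn (SFT P) f) ↔
    (∃ n p q : ℕ, L ≤ n ∧ n < p ∧ n < q ∧ Nat.gcd p q = 1 ∧
      ∃ y₁ ∈ SFT P, ∃ y₂ ∈ SFT P,
        (∀ m : ℤ, y₁ (m + (p : ℤ)) = y₁ m) ∧
        (∀ m : ℤ, y₂ (m + (q : ℤ)) = y₂ m) ∧
        (∀ i : ℕ, i < n → y₁ (i : ℤ) = y₂ (i : ℤ))) := by
  constructor
  · rintro ⟨f, hmeas, hequiv⟩
    exact forward_direction hb hL f hmeas hequiv
  · rintro ⟨n, p, q, hLn, hnp, hnq, hcop, y₁, hy₁, y₂, hy₂, hper1, hper2, hagr⟩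
    exact backward_direction hL hLn hnp hnq hcop hy₁ hy₂ hper1 hper2 hagr
end
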